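/- arXiv:1407.4712 — 9 statements merged into one kernel-verified Lean document; each statement's English description precedes it below -/
import Mathlib

section
/- Let Δ be a building of type (W,S) in which every panel has cardinality exactly two, i.e., for every chamber C and every index i there is exactly one chamber C' with δ C C' = sᵢ. Then Δ can be identified with its Coxeter group: there exists a bijection φ : Δ ≃ W such that δ C D = (φ C)⁻¹ * (φ D) for all chambers C, D. -/
/-- Let `Δ` be a building of type `(W, S)` in which every panel has cardinality
exactly two, i.e. for every chamber `C` and every index `i` there is exactly one chamber `C'`
with `δ C C' = sᵢ`. Then `Δ` can be identified with its Coxeter group: there is a bijection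
`φ : Δ ≃ W` such that `δ C D = (φ C)⁻¹ * (φ D)` for all chambers `C`, `D`. -/
theorem thin_building_is_coxeter_group {B : Type*} {W : Type*} [Group W]
    {M : CoxeterMatrix B} (cs : CoxeterSystem M W)
    {Δ : Type*} [Nonempty Δ] (δ : Δ → Δ → W)
    (hWD1 : ∀ C D : Δ, δ C D = 1 ↔ C = D)
    (hWD2 : ∀ (C C' D : Δ) (i : B), δ C' C = cs.simple i →
      (δ C' D = cs.simple i * δ C D ∨ δ C' D = δ C D) ∧
      (cs.length (cs.simple i * δ C D) = cs.length (δ C D) + 1 →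
        δ C' D = cs.simple i * δ C D))
    (hWD3 : ∀ (C D : Δ) (i : B), ∃ C' : Δ,
      δ C' C = cs.simple i ∧ δ C' D = cs.simple i * δ C D)
    (hthin : ∀ (C : Δ) (i : B), ∃! C' : Δ, δ C C' = cs.simple i) :
    ∃ φ : Δ ≃ W, ∀ C D : Δ, δ C D = (φ C)⁻¹ * (φ D) := by
  have hs1 : ∀ i : B, cs.simple i ≠ 1 := by
    intro i h
    have := cs.length_simple i
    rw [h, cs.length_one] at this
    exact one_ne_zero this.symm
  -- symmetry for simple reflections
  have symm : ∀ (A A' : Δ) (i : B), δ A' A = cs.simple i → δ A A' = cs.simple i := by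
    intro A A' i h
    rcases (hWD2 A A' A' i h).1 with h1 | h1
    · have : δ A' A' = 1 := (hWD1 A' A').2 rfl
      rw [this] at h1
      calc δ A A' = cs.simple i * (cs.simple i * δ A A') := by
              rw [← mul_assoc, cs.simple_mul_simple_self, one_mul]
        _ = cs.simple i := by rw [← h1, mul_one]
    · have : δ A' A' = 1 := (hWD1 A' A').2 rfl
      rw [this] at h1
      have hA : A = A' := (hWD1 A A').1 h1.symm
      rw [hA] at h
      rw [(hWD1 A' A').2 rfl] at h
      exact absurd h.symm (hs1 i)
  -- the cocycle property
  have cocycle : ∀ (n : ℕ) (A B C : Δ), cs.length (δ A B) = n →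
      δ A C = δ A B * δ B C := by
    intro n
    induction n using Nat.strong_induction_on with
    | _ n ih =>
      intro A B C hn
      by_cases hAB : δ A B = 1
      · rw [hAB, one_mul]
        rw [(hWD1 A B).1 hAB]
      · obtain ⟨i, hi⟩ := cs.exists_leftDescent_of_ne_one hAB
        obtain ⟨A', hA'1, hA'2⟩ := hWD3 A B i
        obtain ⟨A'', hA''1, hA''2⟩ := hWD3 A C i
        have hAA' : δ A A' = cs.simple i := symm A A' i hA'1
        have hAA'' : δ A A'' = cs.simple i := symm A A'' i hA''1
        obtain ⟨X, -, hX⟩ := hthin A i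
        have hEq : A' = A'' := by rw [hX A' hAA', hX A'' hAA'']
        have hlen : cs.length (δ A' B) < n := by
          rw [hA'2, ← hn]
          exact hi
        have hIH := ih _ hlen A' B C rfl
        have : cs.simple i * δ A C = cs.simple i * (δ A B * δ B C) := by
          rw [← hA''2, ← hEq, hIH, hA'2, mul_assoc]
        rw [mul_left_cancel this]
    -- done
  obtain ⟨C₀⟩ := ‹Nonempty Δ›
  have cocy : ∀ A B C : Δ, δ A C = δ A B * δ B C := fun A B C =>
    cocycle (cs.length (δ A B)) A B C rfl
  have hinj : Function.Injective (fun C => δ C₀ C) := by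
    intro C D h
    have := cocy C C₀ D
    simp only at h
    have h2 : δ C D = (δ C₀ C)⁻¹ * δ C₀ D := by
      have := cocy C₀ C D
      rw [this, ← mul_assoc, inv_mul_cancel, one_mul]
    rw [← h, inv_mul_cancel] at h2
    exact (hWD1 C D).1 h2
  have hsurj : Function.Surjective (fun C => δ C₀ C) := by
    intro w
    induction w using cs.simple_induction_right with
    | one => exact ⟨C₀, (hWD1 C₀ C₀).2 rfl⟩
    | mul_simple_right w i hw =>
      obtain ⟨C, hC⟩ := hw
      obtain ⟨C', hC'1, -⟩ := hWD3 C C i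
      refine ⟨C', ?_⟩
      simp only at hC ⊢
      rw [cocy C₀ C C', symm C C' i hC'1, hC]
  refine ⟨Equiv.ofBijective _ ⟨hinj, hsurj⟩, fun C D => ?_⟩
  show δ C D = (δ C₀ C)⁻¹ * δ C₀ D
  rw [cocy C₀ C D, ← mul_assoc, inv_mul_cancel, one_mul]
end

section
/- Let Δ be a building of type (W,S), T ⊆ B a subset of the index set, and C, D chambers. Then δ C D lies in W_T (the subgroup of W generated by {sᵢ : i ∈ T}) if and only if there is a gallery of type T from C to D, i.e., a finite sequence C = X₀, X₁, …, X_m = D of chambers such that for each k < m there is some i_k ∈ T with δ X_k X_{k+1} = s_{i_k}. -/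
/-- Let `Δ` be a building of type `(W, S)`, `T ⊆ B` a subset of the index set
and `C`, `D` chambers. Then `δ C D` lies in `W_T` (the subgroup of `W` generated by
`{sᵢ : i ∈ T}`) if and only if there is a gallery of type `T` from `C` to `D`, i.e. a finite
sequence `C = X₀, X₁, …, X_m = D` of chambers such that for each `k < m` there is some
`i_k ∈ T` with `δ X_k X_{k+1} = s_{i_k}`. -/
theorem delta_mem_parabolic_iff_gallery {B : Type*} {W : Type*} [Group W]
    {M : CoxeterMatrix B} (cs : CoxeterSystem M W)
    {Δ : Type*} [Nonempty Δ] (δ : Δ → Δ → W)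
    (hWD1 : ∀ C D : Δ, δ C D = 1 ↔ C = D)
    (hWD2 : ∀ (C C' D : Δ) (i : B), δ C' C = cs.simple i →
      (δ C' D = cs.simple i * δ C D ∨ δ C' D = δ C D) ∧
      (cs.length (cs.simple i * δ C D) = cs.length (δ C D) + 1 →
        δ C' D = cs.simple i * δ C D))
    (hWD3 : ∀ (C D : Δ) (i : B), ∃ C' : Δ,
      δ C' C = cs.simple i ∧ δ C' D = cs.simple i * δ C D)
    (T : Set B) (C D : Δ) :
    δ C D ∈ Subgroup.closure (cs.simple '' T) ↔
      ∃ (m : ℕ) (X : Fin (m + 1) → Δ), X 0 = C ∧ X (Fin.last m) = D ∧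
        ∀ k : Fin m, ∃ i ∈ T, δ (X k.castSucc) (X k.succ) = cs.simple i := by
  -- simple reflections are nontrivial
  have hs1 : ∀ i : B, cs.simple i ≠ 1 := by
    intro i h
    have := cs.length_simple i
    rw [h, cs.length_one] at this
    exact one_ne_zero this.symm
  -- symmetry of δ on simple values
  have sym : ∀ (X Y : Δ) (i : B), δ X Y = cs.simple i → δ Y X = cs.simple i := by
    intro X Y i h
    have h2 := (hWD2 Y X X i h).1
    rw [(hWD1 X X).2 rfl] at h2
    rcases h2 with h2 | h2
    · rw [eq_comm, mul_eq_one_iff_inv_eq, cs.inv_simple] at h2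
      exact h2.symm
    · exfalso
      apply hs1 i
      rw [← h]
      exact (hWD1 X Y).2 ((hWD1 Y X).1 h2.symm).symm
  constructor
  · -- membership → gallery
    intro hmem
    have hmem' : δ C D ∈ Submonoid.closure (cs.simple '' T ∪ (cs.simple '' T)⁻¹) := by
      rw [← Subgroup.closure_toSubmonoid] at *
      exact hmem
    obtain ⟨l, hl, hprod⟩ := Submonoid.exists_list_of_mem_closure hmem'
    -- every element of the list is a simple reflection with index in T
    have hl' : ∀ x ∈ l, ∃ i ∈ T, x = cs.simple i := by
      intro x hx
      rcases hl x hx with h | h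
      · obtain ⟨i, hi, rfl⟩ := h
        exact ⟨i, hi, rfl⟩
      · obtain ⟨i, hi, hix⟩ := h
        refine ⟨i, hi, ?_⟩
        rw [← cs.inv_simple i, hix, inv_inv]
    clear hmem hmem' hl
    -- build the gallery by induction on a word representing δ C D
    have key : ∀ l : List W, (∀ x ∈ l, ∃ i ∈ T, x = cs.simple i) →
        ∀ C : Δ, δ C D = l.prod →
        ∃ (m : ℕ) (X : Fin (m + 1) → Δ), X 0 = C ∧ X (Fin.last m) = D ∧
          ∀ k : Fin m, ∃ i ∈ T, δ (X k.castSucc) (X k.succ) = cs.simple i := by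
      intro l
      induction l with
      | nil =>
        intro _ C hC
        simp only [List.prod_nil] at hC
        refine ⟨0, fun _ => C, rfl, ((hWD1 C D).1 hC) ▸ rfl, fun k => k.elim0⟩
      | cons x l ih =>
        intro hmemL C hC
        obtain ⟨i, hiT, rfl⟩ := hmemL x List.mem_cons_self
        obtain ⟨C', hC'C, hC'D⟩ := hWD3 C D i
        have hC'D' : δ C' D = l.prod := by
          rw [hC'D, hC, List.prod_cons, ← mul_assoc, cs.simple_mul_simple_self, one_mul]
        obtain ⟨m, X, hX0, hXlast, hXstep⟩ :=
          ih (fun y hy => hmemL y (List.mem_cons_of_mem _ hy)) C' hC'D'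
        refine ⟨m + 1, Fin.cons C X, Fin.cons_zero _ _, ?_, ?_⟩
        · rw [← Fin.succ_last, Fin.cons_succ]
          exact hXlast
        · intro k
          induction k using Fin.cases with
          | zero =>
            refine ⟨i, hiT, ?_⟩
            rw [Fin.castSucc_zero, Fin.cons_zero, Fin.cons_succ, hX0]
            exact sym C' C i hC'C
          | succ j =>
            obtain ⟨i', hi'T, hi'⟩ := hXstep j
            refine ⟨i', hi'T, ?_⟩
            rw [← Fin.succ_castSucc, Fin.cons_succ, Fin.cons_succ]
            exact hi'
    exact key l hl' C hprod.symm
  · -- gallery → membership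
    rintro ⟨m, X, hX0, hXlast, hXstep⟩
    subst hX0 hXlast
    induction m with
    | zero =>
      have : (0 : Fin 1) = Fin.last 0 := rfl
      rw [this, (hWD1 _ _).2 rfl]
      exact Subgroup.one_mem _
    | succ m ih =>
      -- tail gallery
      have tail := ih (fun k => X k.succ) (fun k => by
        simpa only [← Fin.succ_castSucc] using hXstep k.succ)
      obtain ⟨i, hiT, hstep⟩ := hXstep 0
      have hstep' : δ (X 0) (X 1) = cs.simple i := by
        simpa using hstep
      have h2 := (hWD2 (X 1) (X 0) (X (Fin.last (m + 1))) i hstep').1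
      have hC'D : δ (X 1) (X (Fin.last (m + 1))) ∈ Subgroup.closure (cs.simple '' T) := by
        have e : (Fin.last (m + 1)) = (Fin.last m).succ := (Fin.succ_last m).symm
        rw [e]
        show δ ((fun k : Fin (m + 1) => X k.succ) 0) ((fun k : Fin (m + 1) => X k.succ) (Fin.last m)) ∈ _
        have e0 : ((0 : Fin (m + 1)).succ : Fin (m + 2)) = 1 := Fin.succ_zero_eq_one
        simpa [e0] using tail
      have hsi : cs.simple i ∈ Subgroup.closure (cs.simple '' T) :=
        Subgroup.subset_closure ⟨i, hiT, rfl⟩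
      rcases h2 with h2 | h2
      · rw [h2]
        exact Subgroup.mul_mem _ hsi hC'D
      · rw [h2]
        exact hC'D
end

section
/- Let Δ be a building of type (W,S) and T ⊆ B. Then every T-residue R = R_T(C₀) is a building of type (W_T, T): δ maps R × R into the subgroup W_T, and the restriction of δ to R satisfies axioms (WD1), (WD2) and (WD3) with the index i ranging only over T (in the length clause of (WD2) the length function ℓ of W may be used, since the length function of the standard parabolic subgroup W_T agrees with ℓ on W_T). -/
private lemma word_of_mem_closure {B : Type*} {W : Type*} [Group W]
    {M : CoxeterMatrix B} (cs : CoxeterSystem M W) (T : Set B) {w : W}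
    (hw : w ∈ Subgroup.closure (cs.simple '' T)) :
    ∃ ω : List B, (∀ i ∈ ω, i ∈ T) ∧ cs.wordProd ω = w := by
  induction hw using Subgroup.closure_induction with
  | mem x hx =>
    obtain ⟨i, hi, rfl⟩ := hx
    exact ⟨[i], by simpa using hi, cs.wordProd_singleton i⟩
  | one => exact ⟨[], by simp, cs.wordProd_nil⟩
  | mul x y _ _ hx hy =>
    obtain ⟨ω₁, h1, rfl⟩ := hx
    obtain ⟨ω₂, h2, rfl⟩ := hy
    refine ⟨ω₁ ++ ω₂, ?_, cs.wordProd_append ω₁ ω₂⟩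
    intro i hi
    rcases List.mem_append.mp hi with h | h
    · exact h1 i h
    · exact h2 i h
  | inv x _ hx =>
    obtain ⟨ω, h1, rfl⟩ := hx
    exact ⟨ω.reverse, fun i hi => h1 i (List.mem_reverse.mp hi),
      cs.wordProd_reverse ω⟩

private lemma transfer_mem {B : Type*} {W : Type*} [Group W]
    {M : CoxeterMatrix B} (cs : CoxeterSystem M W)
    {Δ : Type*} (δ : Δ → Δ → W)
    (hWD1 : ∀ C D : Δ, δ C D = 1 ↔ C = D)
    (hWD2 : ∀ (C C' D : Δ) (i : B), δ C' C = cs.simple i →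
      (δ C' D = cs.simple i * δ C D ∨ δ C' D = δ C D) ∧
      (cs.length (cs.simple i * δ C D) = cs.length (δ C D) + 1 →
        δ C' D = cs.simple i * δ C D))
    (hWD3 : ∀ (C D : Δ) (i : B), ∃ C' : Δ,
      δ C' C = cs.simple i ∧ δ C' D = cs.simple i * δ C D)
    (T : Set B) (WT : Subgroup W) (hWT : WT = Subgroup.closure (cs.simple '' T)) :
    ∀ ω : List B, (∀ i ∈ ω, i ∈ T) → ∀ E C D : Δ,
      δ E C = cs.wordProd ω → δ E D ∈ WT → δ C D ∈ WT := by
  intro ω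
  induction ω with
  | nil =>
    intro _ E C D hEC hED
    rw [cs.wordProd_nil] at hEC
    rw [← (hWD1 E C).mp hEC]
    exact hED
  | cons i ω ih =>
    intro hmem E C D hEC hED
    have hiT : i ∈ T := hmem i List.mem_cons_self
    have hsi : cs.simple i ∈ WT := by
      rw [hWT]; exact Subgroup.subset_closure ⟨i, hiT, rfl⟩
    obtain ⟨C₁, hC₁E, hC₁C⟩ := hWD3 E C i
    have hC₁C' : δ C₁ C = cs.wordProd ω := by
      rw [hC₁C, hEC, cs.wordProd_cons, ← mul_assoc, cs.simple_mul_simple_self,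
        one_mul]
    have hC₁D : δ C₁ D ∈ WT := by
      rcases (hWD2 E C₁ D i hC₁E).1 with h | h
      · rw [h]; exact mul_mem hsi hED
      · rw [h]; exact hED
    exact ih (fun j hj => hmem j (List.mem_cons_of_mem i hj)) C₁ C D hC₁C' hC₁D

/-- Let `Δ` be a building of type `(W, S)` and `T ⊆ B`. Every `T`-residue
`R = R_T(C₀) = {D | δ C₀ D ∈ W_T}` is a building of type `(W_T, T)`: `δ` maps `R × R` into the
standard parabolic subgroup `W_T = ⟨sᵢ : i ∈ T⟩`, and the restriction of `δ` to `R` satisfies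
the building axioms (WD1), (WD2) and (WD3) with the index `i` ranging only over `T` (in the
length clause of (WD2) we may use the length function `ℓ` of `W`, since the length function of
`W_T` agrees with `ℓ` on `W_T`). -/
theorem residue_is_building {B : Type*} {W : Type*} [Group W]
    {M : CoxeterMatrix B} (cs : CoxeterSystem M W)
    {Δ : Type*} [Nonempty Δ] (δ : Δ → Δ → W)
    (hWD1 : ∀ C D : Δ, δ C D = 1 ↔ C = D)
    (hWD2 : ∀ (C C' D : Δ) (i : B), δ C' C = cs.simple i →
      (δ C' D = cs.simple i * δ C D ∨ δ C' D = δ C D) ∧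
      (cs.length (cs.simple i * δ C D) = cs.length (δ C D) + 1 →
        δ C' D = cs.simple i * δ C D))
    (hWD3 : ∀ (C D : Δ) (i : B), ∃ C' : Δ,
      δ C' C = cs.simple i ∧ δ C' D = cs.simple i * δ C D)
    (T : Set B) (C₀ : Δ) (WT : Subgroup W) (hWT : WT = Subgroup.closure (cs.simple '' T))
    (R : Set Δ) (hR : R = {D : Δ | δ C₀ D ∈ WT}) :
    -- δ maps R × R into W_T
    (∀ C ∈ R, ∀ D ∈ R, δ C D ∈ WT) ∧
    -- (WD1) on R
    (∀ C ∈ R, ∀ D ∈ R, δ C D = 1 ↔ C = D) ∧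
    -- (WD2) on R, indices ranging over T
    (∀ C ∈ R, ∀ C' ∈ R, ∀ D ∈ R, ∀ i ∈ T, δ C' C = cs.simple i →
      (δ C' D = cs.simple i * δ C D ∨ δ C' D = δ C D) ∧
      (cs.length (cs.simple i * δ C D) = cs.length (δ C D) + 1 →
        δ C' D = cs.simple i * δ C D)) ∧
    -- (WD3) on R, indices ranging over T, with the new chamber again in R
    (∀ C ∈ R, ∀ D ∈ R, ∀ i ∈ T, ∃ C' ∈ R,
      δ C' C = cs.simple i ∧ δ C' D = cs.simple i * δ C D) := by
  have transfer := transfer_mem cs δ hWD1 hWD2 hWD3 T WT hWT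
  have key : ∀ C ∈ R, ∀ D : Δ, δ C₀ D ∈ WT → δ C D ∈ WT := by
    intro C hC D hD
    rw [hR] at hC
    obtain ⟨ω, hω, hωeq⟩ := word_of_mem_closure cs T (hWT ▸ hC)
    exact transfer ω hω C₀ C D hωeq.symm hD
  refine ⟨?_, ?_, ?_, ?_⟩
  · intro C hC D hD
    exact key C hC D (by rw [hR] at hD; exact hD)
  · intro C _ D _
    exact hWD1 C D
  · intro C _ C' _ D _ i _ h
    exact hWD2 C C' D i h
  · intro C hC D hD i hiT
    obtain ⟨C', h1, h2⟩ := hWD3 C D i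
    refine ⟨C', ?_, h1, h2⟩
    rw [hR]
    have hCC₀ : δ C C₀ ∈ WT := key C hC C₀ (by
      have : δ C₀ C₀ = 1 := (hWD1 C₀ C₀).mpr rfl
      rw [this]; exact one_mem WT)
    have hsi : cs.simple i ∈ WT := by
      rw [hWT]; exact Subgroup.subset_closure ⟨i, hiT, rfl⟩
    have hC'C₀ : δ C' C₀ ∈ WT := by
      rcases (hWD2 C C' C₀ i h1).1 with h | h
      · rw [h]; exact mul_mem hsi hCC₀
      · rw [h]; exact hCC₀
    obtain ⟨ω, hω, hωeq⟩ := word_of_mem_closure cs T (hWT ▸ hC'C₀)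
    have hone : δ C' C' = 1 := (hWD1 C' C').mpr rfl
    exact transfer ω hω C' C₀ C' hωeq.symm (hone ▸ one_mem WT)
end

section
/- Let Δ be a building of type (W,S), R a T-residue in Δ, and C₀ any chamber of Δ. Then there exists a unique chamber C ∈ R such that ℓ(δ C C₀) ≤ ℓ(δ D C₀) for every D ∈ R; this C is called the projection (gate) of C₀ onto R. -/
namespace BuildingGate

open List

variable {B : Type*} {W : Type*} [Group W] {M : CoxeterMatrix B} (cs : CoxeterSystem M W)

/-! ### Part I: Tits' permutation representation and the strong exchange property -/

open Classical in
/-- The function underlying Tits' reflection-counting permutation. -/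
noncomputable def tpFun (i : B) : W × ZMod 2 → W × ZMod 2 :=
  fun x => (cs.simple i * x.1 * cs.simple i, x.2 + if x.1 = cs.simple i then 1 else 0)

theorem simple_conj_eq_iff (i : B) (w : W) :
    cs.simple i * w * cs.simple i = cs.simple i ↔ w = cs.simple i := by
  constructor
  · intro hw
    have := congrArg (fun z => cs.simple i * z * cs.simple i) hw
    rw [show cs.simple i * (cs.simple i * w * cs.simple i) * cs.simple i = w by
      simp [mul_assoc]] at this
    simp [this]
  · rintro rfl; simp

theorem tpFun_involutive (i : B) : Function.Involutive (tpFun cs i) := by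
  classical
  rintro ⟨w, e⟩
  simp only [tpFun, simple_conj_eq_iff]
  refine Prod.ext ?_ ?_
  · simp [mul_assoc]
  · dsimp only
    by_cases hw : w = cs.simple i
    · subst hw
      simp only [if_pos rfl]
      revert e
      decide
    · simp [hw]

/-- Tits' permutation associated to the simple reflection `i`. -/
noncomputable def tperm (i : B) : Equiv.Perm (W × ZMod 2) :=
  Function.Involutive.toPerm _ (tpFun_involutive cs i)

open Classical in
theorem tperm_apply (i : B) (x : W × ZMod 2) :
    tperm cs i x = (cs.simple i * x.1 * cs.simple i,
      x.2 + if x.1 = cs.simple i then 1 else 0) := rfl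

theorem simple_mul_pow (i j : B) (r : ℕ) :
    cs.simple i * (cs.simple i * cs.simple j) ^ r
      = (cs.simple j * cs.simple i) ^ r * cs.simple i := by
  induction r with
  | zero => simp
  | succ r ih =>
    rw [pow_succ, ← mul_assoc, ih, pow_succ]
    simp [mul_assoc]

theorem pow_inv_eq (i j : B) (r : ℕ) :
    ((cs.simple i * cs.simple j) ^ r)⁻¹ = (cs.simple j * cs.simple i) ^ r := by
  rw [← inv_pow, mul_inv_rev, cs.inv_simple, cs.inv_simple]

open Classical in
theorem tperm_mul_pow_apply (i j : B) (r : ℕ) (x : W × ZMod 2) :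
    ((tperm cs i * tperm cs j) ^ r) x =
      ((cs.simple i * cs.simple j) ^ r * x.1 * (cs.simple j * cs.simple i) ^ r,
        x.2 + ∑ k ∈ Finset.range (2 * r),
          if x.1 = (cs.simple j * cs.simple i) ^ (k + 1) * cs.simple i then 1 else 0) := by
  induction r with
  | zero => simp
  | succ r ih =>
    rw [pow_succ', Equiv.Perm.mul_apply, ih, Equiv.Perm.mul_apply, tperm_apply, tperm_apply]
    dsimp only
    set si := cs.simple i with hsi
    set sj := cs.simple j with hsj
    set p := si * sj with hp
    set q := sj * si with hq
    have hqp : ∀ m : ℕ, q ^ m * p ^ m = 1 := by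
      intro m
      rw [← pow_inv_eq cs i j m, ← hsi, ← hsj, ← hp, inv_mul_cancel]
    have hpq : ∀ m : ℕ, p ^ m * q ^ m = 1 := by
      intro m
      rw [← pow_inv_eq cs i j m, ← hsi, ← hsj, ← hp, mul_inv_cancel]
    have key : ∀ m : ℕ, si * p ^ m = q ^ m * si := by
      intro m; rw [hp, hq, hsi, hsj]; exact simple_mul_pow cs i j m
    -- rewrite the two new indicators
    have ind1 : ∀ y : W, (p ^ r * y * q ^ r = sj) ↔ (y = q ^ (2 * r + 1) * si) := by
      intro y
      have hval : q ^ r * sj * p ^ r = q ^ (2 * r + 1) * si := by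
        have h1 : sj = q * si := by rw [hq, hsi, hsj]; simp [mul_assoc]
        rw [show 2 * r + 1 = r + 1 + r by omega]
        rw [h1, ← mul_assoc, ← pow_succ, mul_assoc, key r, ← mul_assoc, ← pow_add]
      constructor
      · intro h
        have hy : y = q ^ r * (p ^ r * y * q ^ r) * p ^ r := by
          rw [show q ^ r * (p ^ r * y * q ^ r) * p ^ r = (q ^ r * p ^ r) * y * (q ^ r * p ^ r) by
            simp [mul_assoc], hqp r, one_mul, mul_one]
        rw [hy, h, hval]
      · intro h
        rw [h, ← hval, show p ^ r * (q ^ r * sj * p ^ r) * q ^ r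
            = (p ^ r * q ^ r) * sj * (p ^ r * q ^ r) by simp [mul_assoc],
          hpq r, one_mul, mul_one]
    have ind2 : ∀ y : W, (sj * (p ^ r * y * q ^ r) * sj = si) ↔ (y = q ^ (2 * r + 2) * si) := by
      intro y
      have hval : q ^ r * (sj * si * sj) * p ^ r = q ^ (2 * r + 2) * si := by
        have h1 : sj * si * sj = q ^ 2 * si := by
          rw [hq, hsi, hsj, pow_two]
          simp [mul_assoc]
        rw [show 2 * r + 2 = r + 2 + r by omega]
        rw [h1, ← mul_assoc, ← pow_add, mul_assoc, key r, ← mul_assoc, ← pow_add]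
      have hconj : ∀ z : W, sj * (sj * z * sj) * sj = z := by
        intro z
        rw [hsj]
        simp [mul_assoc]
      constructor
      · intro h
        have h2 : p ^ r * y * q ^ r = sj * si * sj := by
          rw [← h, hconj]
        have hy : y = q ^ r * (p ^ r * y * q ^ r) * p ^ r := by
          rw [show q ^ r * (p ^ r * y * q ^ r) * p ^ r = (q ^ r * p ^ r) * y * (q ^ r * p ^ r) by
            simp [mul_assoc], hqp r, one_mul, mul_one]
        rw [hy, h2, hval]
      · intro h
        have h2 : p ^ r * y * q ^ r = sj * si * sj := by
          rw [h, ← hval, show p ^ r * (q ^ r * (sj * si * sj) * p ^ r) * q ^ r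
              = (p ^ r * q ^ r) * (sj * si * sj) * (p ^ r * q ^ r) by simp [mul_assoc],
            hpq r, one_mul, mul_one]
        rw [h2]
        exact hconj si
    refine Prod.ext ?_ ?_
    · dsimp only
      rw [pow_succ' p r, pow_succ q r]
      simp [hp, hq, mul_assoc]
    · dsimp only
      rw [show 2 * (r + 1) = (2 * r + 1) + 1 by omega, Finset.sum_range_succ,
        Finset.sum_range_succ, show (2 * r + 1) + 1 = 2 * r + 2 by omega]
      simp only [ind1 x.1, ind2 x.1]
      ring

theorem tperm_liftable : M.IsLiftable (tperm cs) := by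
  classical
  intro i j
  apply Equiv.ext
  intro x
  rw [tperm_mul_pow_apply, Equiv.Perm.one_apply]
  have h1 : (cs.simple i * cs.simple j) ^ M i j = 1 := cs.simple_mul_simple_pow i j
  have h2 : (cs.simple j * cs.simple i) ^ M i j = 1 := cs.simple_mul_simple_pow' i j
  have hsum : (∑ k ∈ Finset.range (2 * M i j),
      if x.1 = (cs.simple j * cs.simple i) ^ (k + 1) * cs.simple i then (1 : ZMod 2) else 0)
      = 0 := by
    rw [two_mul, Finset.sum_range_add]
    have : ∀ k, ((if x.1 = (cs.simple j * cs.simple i) ^ (M i j + k + 1) * cs.simple i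
        then (1 : ZMod 2) else 0))
        = (if x.1 = (cs.simple j * cs.simple i) ^ (k + 1) * cs.simple i then 1 else 0) := by
      intro k
      congr 2
      rw [show M i j + k + 1 = M i j + (k + 1) by omega, pow_add, h2, one_mul]
    simp only [this]
    exact CharTwo.add_self_eq_zero _
  rw [h1, h2, hsum, one_mul, mul_one, add_zero]

/-- Tits' permutation representation. -/
noncomputable def tphi : W →* Equiv.Perm (W × ZMod 2) :=
  cs.lift ⟨tperm cs, tperm_liftable cs⟩

theorem tphi_simple (i : B) : tphi cs (cs.simple i) = tperm cs i :=
  cs.lift_apply_simple (tperm_liftable cs) i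

theorem tphi_apply_eq (g : W) : ∀ (x : W) (e : ZMod 2),
    tphi cs g (x, e) = (g * x * g⁻¹, e + (tphi cs g (x, 0)).2) := by
  induction g using CoxeterSystem.simple_induction_left cs with
  | one =>
    intro x e
    simp
  | mul_simple_left w i ih =>
    intro x e
    have hm : tphi cs (cs.simple i * w) = tphi cs (cs.simple i) * tphi cs w := map_mul _ _ _
    rw [hm, Equiv.Perm.mul_apply, Equiv.Perm.mul_apply, ih x e, ih x 0, tphi_simple,
      tperm_apply, tperm_apply]
    refine Prod.ext ?_ ?_
    · dsimp only
      rw [mul_inv_rev, cs.inv_simple]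
      simp [mul_assoc]
    · dsimp only
      rw [zero_add, add_assoc]

open Classical in
theorem tphi_wordProd_inv_apply (ω : List B) : ∀ (x : W) (e : ZMod 2),
    tphi cs (cs.wordProd ω)⁻¹ (x, e) =
      ((cs.wordProd ω)⁻¹ * x * cs.wordProd ω,
        e + ((cs.leftInvSeq ω).count x : ZMod 2)) := by
  induction ω with
  | nil =>
    intro x e
    simp [CoxeterSystem.leftInvSeq]
  | cons i ω ih =>
    intro x e
    have hw : (cs.wordProd (i :: ω))⁻¹ = (cs.wordProd ω)⁻¹ * cs.simple i := by
      rw [cs.wordProd_cons, mul_inv_rev, cs.inv_simple]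
    rw [hw, map_mul, Equiv.Perm.mul_apply, tphi_simple, tperm_apply]
    dsimp only
    rw [ih]
    have hlis : cs.leftInvSeq (i :: ω)
        = cs.simple i :: List.map (⇑(MulAut.conj (cs.simple i))) (cs.leftInvSeq ω) := rfl
    rw [hlis]
    refine Prod.ext ?_ ?_
    · dsimp only
      rw [cs.wordProd_cons]
      simp [mul_assoc]
    · dsimp only
      have hcnt : (cs.simple i :: List.map (⇑(MulAut.conj (cs.simple i)))
          (cs.leftInvSeq ω)).count x
          = (List.map (⇑(MulAut.conj (cs.simple i))) (cs.leftInvSeq ω)).count x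
            + if x = cs.simple i then 1 else 0 := by
        rw [List.count_cons]
        by_cases hx : x = cs.simple i
        · simp [hx]
        · simp [hx, Ne.symm hx]
      have hmap : (List.map (⇑(MulAut.conj (cs.simple i))) (cs.leftInvSeq ω)).count x
          = (cs.leftInvSeq ω).count (cs.simple i * x * cs.simple i) := by
        have hx : x = (MulAut.conj (cs.simple i)) (cs.simple i * x * cs.simple i) := by
          simp [mul_assoc]
        rw [hx, List.count_map_of_injective _ _ (MulAut.conj (cs.simple i)).injective]
        rw [← hx]
      rw [hcnt, hmap]
      push_cast
      ring

theorem tphi_refl_apply {t : W} (ht : cs.IsReflection t) :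
    tphi cs t (t, 0) = (t, 1) := by
  obtain ⟨u, i, rfl⟩ := ht
  set c := (tphi cs u⁻¹ (u * cs.simple i * u⁻¹, 0)).2 with hc
  set d := (tphi cs u (cs.simple i, 0)).2 with hd
  have hA : tphi cs u⁻¹ (u * cs.simple i * u⁻¹, 0) = (cs.simple i, c) := by
    rw [tphi_apply_eq]
    have h1 : u⁻¹ * (u * cs.simple i * u⁻¹) * u⁻¹⁻¹ = cs.simple i := by
      simp [mul_assoc]
    rw [h1, zero_add, ← hc]
  have hB : ∀ e : ZMod 2, tphi cs u (cs.simple i, e) = (u * cs.simple i * u⁻¹, e + d) := by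
    intro e
    rw [tphi_apply_eq, ← hd]
  have hC : c + d = 0 := by
    have h1 : tphi cs u (tphi cs u⁻¹ (u * cs.simple i * u⁻¹, 0))
        = (u * cs.simple i * u⁻¹, 0) := by
      rw [← Equiv.Perm.mul_apply, ← map_mul]
      simp
    rw [hA, hB] at h1
    have h2 := congrArg Prod.snd h1
    simpa using h2
  have hD : tphi cs (u * cs.simple i * u⁻¹) = tphi cs (u * cs.simple i) * tphi cs u⁻¹ := by
    rw [← map_mul]
  rw [hD, Equiv.Perm.mul_apply, hA, map_mul, Equiv.Perm.mul_apply, tphi_simple, tperm_apply]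
  dsimp only
  rw [if_pos rfl]
  rw [show cs.simple i * cs.simple i * cs.simple i = cs.simple i by simp]
  rw [hB]
  have h2 : c + 1 + d = (c + d) + 1 := by ring
  rw [h2, hC, zero_add]

open Classical in
theorem parity_eq_one_of_lt {t w : W} (ht : cs.IsReflection t)
    (hlt : cs.length (t * w) < cs.length w) :
    (tphi cs w⁻¹ (t, 0)).2 = 1 := by
  by_contra h
  have h0 : (tphi cs w⁻¹ (t, 0)).2 = 0 := by
    have h2 : ∀ z : ZMod 2, z = 0 ∨ z = 1 := by decide
    rcases h2 _ with h' | h'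
    · exact h'
    · exact absurd h' h
  have hv : (tphi cs (t * w)⁻¹ (t, 0)).2 = 1 := by
    have hinv : (t * w)⁻¹ = w⁻¹ * t := by rw [mul_inv_rev, ht.inv]
    rw [hinv, map_mul, Equiv.Perm.mul_apply, tphi_refl_apply cs ht, tphi_apply_eq]
    dsimp only
    rw [show ((1 : ZMod 2) + (tphi cs w⁻¹ (t, 0)).2) = 1 + 0 by rw [h0]]
    decide
  obtain ⟨ν, hνl, hνw⟩ := cs.exists_reduced_word (t * w)
  have hred : cs.IsReduced ν := by
    exact hνl
  have hcount : (((cs.leftInvSeq ν).count t : ℕ) : ZMod 2) = 1 := by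
    have h2 := tphi_wordProd_inv_apply cs ν t 0
    rw [← hνw] at h2
    rw [h2] at hv
    rw [← hv]
    rw [zero_add]
  have hmem : t ∈ cs.leftInvSeq ν := by
    by_contra hmem
    rw [List.count_eq_zero.mpr hmem] at hcount
    simp at hcount
  have hinv := cs.isLeftInversion_of_mem_leftInvSeq hred hmem
  rw [← hνw] at hinv
  have h3 : t * (t * w) = w := by rw [← mul_assoc, ht.mul_self, one_mul]
  have h4 := hinv.2
  rw [h3] at h4
  omega

theorem mem_leftInvSeq_of_lt {t : W} (ht : cs.IsReflection t) (ω : List B)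
    (hlt : cs.length (t * cs.wordProd ω) < cs.length (cs.wordProd ω)) :
    t ∈ cs.leftInvSeq ω := by
  classical
  have h1 := parity_eq_one_of_lt cs ht hlt
  have h2 := tphi_wordProd_inv_apply cs ω t 0
  rw [h2] at h1
  dsimp only at h1
  rw [zero_add] at h1
  by_contra hmem
  rw [List.count_eq_zero.mpr hmem] at h1
  simp at h1

/-- The strong exchange property (left version). -/
theorem exchange_left {t : W} (ht : cs.IsReflection t) (ω : List B)
    (hlt : cs.length (t * cs.wordProd ω) < cs.length (cs.wordProd ω)) :
    ∃ j < ω.length, t * cs.wordProd ω = cs.wordProd (ω.eraseIdx j) := by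
  have hmem := mem_leftInvSeq_of_lt cs ht ω hlt
  obtain ⟨j, hj, hget⟩ := List.mem_iff_getElem.mp hmem
  have hjl : j < ω.length := by
    have := cs.length_leftInvSeq ω
    omega
  refine ⟨j, hjl, ?_⟩
  have hgd : (cs.leftInvSeq ω).getD j 1 = t := by
    rw [List.getD_eq_getElem _ 1 hj, hget]
  rw [← hgd]
  exact cs.getD_leftInvSeq_mul_wordProd ω j

/-- The strong exchange property (right version). -/
theorem exchange_right {t : W} (ht : cs.IsReflection t) (ω : List B)
    (hlt : cs.length (cs.wordProd ω * t) < cs.length (cs.wordProd ω)) :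
    ∃ j < ω.length, cs.wordProd ω * t = cs.wordProd (ω.eraseIdx j) := by
  have hlt' : cs.length (t * cs.wordProd ω.reverse) < cs.length (cs.wordProd ω.reverse) := by
    rw [cs.wordProd_reverse]
    have h1 : t * (cs.wordProd ω)⁻¹ = (cs.wordProd ω * t)⁻¹ := by
      rw [mul_inv_rev, ht.inv]
    rw [h1, cs.length_inv, cs.length_inv]
    exact hlt
  have hmem := mem_leftInvSeq_of_lt cs ht ω.reverse hlt'
  rw [cs.leftInvSeq_reverse, List.mem_reverse] at hmem
  obtain ⟨j, hj, hget⟩ := List.mem_iff_getElem.mp hmem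
  have hjl : j < ω.length := by
    have := cs.length_rightInvSeq ω
    omega
  refine ⟨j, hjl, ?_⟩
  have hgd : (cs.rightInvSeq ω).getD j 1 = t := by
    rw [List.getD_eq_getElem _ 1 hj, hget]
  rw [← hgd]
  exact cs.wordProd_mul_getD_rightInvSeq ω j

/-! ### Part II: standard parabolic subgroups -/

variable (T : Set B)

theorem mem_closure_iff_TWord {w : W} :
    w ∈ Subgroup.closure (cs.simple '' T)
      ↔ ∃ l : List B, (∀ i ∈ l, i ∈ T) ∧ cs.wordProd l = w := by
  constructor
  · intro hw
    induction hw using Subgroup.closure_induction with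
    | mem x hx =>
      obtain ⟨i, hi, rfl⟩ := hx
      exact ⟨[i], by simpa using hi, by simp⟩
    | one => exact ⟨[], by simp, by simp⟩
    | mul x y hx hy ihx ihy =>
      obtain ⟨l1, hl1, rfl⟩ := ihx
      obtain ⟨l2, hl2, rfl⟩ := ihy
      refine ⟨l1 ++ l2, ?_, ?_⟩
      · intro i hi
        rcases List.mem_append.mp hi with h | h
        · exact hl1 i h
        · exact hl2 i h
      · rw [cs.wordProd_append]
    | inv x hx ihx =>
      obtain ⟨l, hl, rfl⟩ := ihx
      refine ⟨l.reverse, ?_, ?_⟩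
      · intro i hi
        exact hl i (List.mem_reverse.mp hi)
      · rw [cs.wordProd_reverse]
  · rintro ⟨l, hl, rfl⟩
    induction l with
    | nil => simp [one_mem]
    | cons i l ih =>
      rw [cs.wordProd_cons]
      refine mul_mem ?_ (ih fun i hi => hl i (List.mem_cons_of_mem _ hi))
      exact Subgroup.subset_closure ⟨i, hl i (List.mem_cons_self), rfl⟩

theorem exists_reduced_TWord {w : W} (hw : w ∈ Subgroup.closure (cs.simple '' T)) :
    ∃ l : List B, (∀ i ∈ l, i ∈ T) ∧ cs.wordProd l = w ∧ cs.IsReduced l := by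
  classical
  obtain ⟨l₀, hl₀, rfl⟩ := (mem_closure_iff_TWord cs T).mp hw
  clear hw
  have key : ∀ (n : ℕ) (l : List B), l.length = n → (∀ i ∈ l, i ∈ T) →
      ∃ l' : List B, (∀ i ∈ l', i ∈ T) ∧ cs.wordProd l' = cs.wordProd l ∧ cs.IsReduced l' := by
    intro n
    induction n using Nat.strong_induction_on with
    | _ n ih =>
      intro l hlen hT
      by_cases hred : cs.IsReduced l
      · exact ⟨l, hT, rfl, hred⟩
      · have hlt : cs.length (cs.wordProd l) < l.length := by
          have h1 := cs.length_wordProd_le l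
          rcases lt_or_eq_of_le h1 with h | h
          · exact h
          · exact absurd h hred
        have hlne : l ≠ [] := by
          intro h
          rw [h] at hlt
          simp at hlt
        have hlpos : 0 < l.length := List.length_pos_iff.mpr hlne
        have hwit : ¬ cs.IsReduced (l.take (l.length - 1 + 1)) := by
          rw [show l.length - 1 + 1 = l.length by omega, List.take_length]
          exact hred
        have hex : ∃ k, ¬ cs.IsReduced (l.take (k + 1)) := ⟨l.length - 1, hwit⟩
        obtain ⟨k, hkspec, hkmin, hkl⟩ : ∃ k, ¬ cs.IsReduced (l.take (k + 1)) ∧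
            (∀ k' < k, cs.IsReduced (l.take (k' + 1))) ∧ k < l.length := by
          refine ⟨Nat.find hex, Nat.find_spec hex, ?_, ?_⟩
          · intro k' hk'
            exact not_not.mp (Nat.find_min hex hk')
          · have := Nat.find_min' hex hwit
            omega
        have hredk : cs.IsReduced (l.take k) := by
          rcases Nat.eq_zero_or_pos k with hk0 | hk0
          · rw [hk0]
            simp [CoxeterSystem.IsReduced]
          · have := hkmin (k - 1) (by omega)
            rwa [show k - 1 + 1 = k by omega] at this
        set j := l[k] with hjdef
        have htake : l.take (k + 1) = l.take k ++ [j] := by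
          rw [← List.take_concat_get' l k hkl]
        have hlenk : (l.take k).length = k := by
          rw [List.length_take]
          omega
        have hu : cs.length (cs.wordProd (l.take k)) = k := by
          have hredk' : cs.length (cs.wordProd (l.take k)) = (l.take k).length := hredk
          rw [hredk', hlenk]
        have hprod : cs.wordProd (l.take (k + 1)) = cs.wordProd (l.take k) * cs.simple j := by
          rw [htake, cs.wordProd_append, cs.wordProd_singleton]
        have husj : cs.length (cs.wordProd (l.take k) * cs.simple j) < k := by
          have hne : cs.length (cs.wordProd (l.take k) * cs.simple j) ≠ k + 1 := by
            intro h
            apply hkspec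
            rw [CoxeterSystem.IsReduced, hprod, List.length_take, h]
            omega
          rcases cs.length_mul_simple (cs.wordProd (l.take k)) j with h | h
          · rw [hu] at h
            exact absurd h hne
          · rw [hu] at h
            omega
        obtain ⟨r, hr, herase⟩ := exchange_right cs (cs.isReflection_simple j) (l.take k)
          (by rw [hu]; exact husj)
        rw [hlenk] at hr
        set l' := (l.take k).eraseIdx r ++ l.drop (k + 1) with hl'def
        have hT' : ∀ i ∈ l', i ∈ T := by
          intro i hi
          rcases List.mem_append.mp hi with h | h
          · exact hT i (List.take_sublist k l |>.subset (List.eraseIdx_subset h))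
          · exact hT i (List.drop_sublist (k + 1) l |>.subset h)
        have hprod' : cs.wordProd l' = cs.wordProd l := by
          rw [hl'def, cs.wordProd_append, ← herase, ← hprod]
          rw [← cs.wordProd_append, List.take_append_drop]
        have hlen' : l'.length < n := by
          rw [hl'def, List.length_append, List.length_eraseIdx_of_lt (by rwa [hlenk]),
            List.length_drop, hlenk]
          omega
        obtain ⟨l'', h1, h2, h3⟩ := ih l'.length hlen' l' rfl hT'
        exact ⟨l'', h1, h2.trans hprod', h3⟩
  exact key l₀.length l₀ rfl hl₀

theorem descent_T {w : W} (hw : w ∈ Subgroup.closure (cs.simple '' T)) (hne : w ≠ 1) :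
    ∃ i ∈ T, cs.length (cs.simple i * w) + 1 = cs.length w := by
  obtain ⟨l, hlT, hlw, hlred⟩ := exists_reduced_TWord cs T hw
  match l, hlT, hlw, hlred with
  | [], _, hlw, _ =>
    exact absurd (by simpa using hlw.symm) hne
  | i :: l', hlT, hlw, hlred =>
    refine ⟨i, hlT i (List.mem_cons_self), ?_⟩
    have h1 : cs.simple i * w = cs.wordProd l' := by
      rw [← hlw, cs.wordProd_cons, ← mul_assoc]
      simp
    have h2 : cs.length (cs.simple i * w) ≤ l'.length := by
      rw [h1]
      exact cs.length_wordProd_le l'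
    have h3 : cs.length w = l'.length + 1 := by
      rw [← hlw, hlred]
      simp
    rcases cs.length_simple_mul w i with h | h
    · omega
    · omega

/-- The key dihedral-type lemma: if `j` is a left descent, `i` a right descent,
and `s j * w * s i` has the same length as `w`, then `s j * w = w * s i`. -/
theorem lemX {w : W} {i j : B} (hj : cs.length (cs.simple j * w) < cs.length w)
    (hi : cs.length (w * cs.simple i) < cs.length w)
    (hij : cs.length (cs.simple j * w * cs.simple i) = cs.length w) :
    cs.simple j * w = w * cs.simple i := by
  have hj' : cs.length (cs.simple j * w) + 1 = cs.length w := by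
    rcases cs.length_simple_mul w j with h | h
    · omega
    · omega
  obtain ⟨ν, hνl, hνw⟩ := cs.exists_reduced_word (cs.simple j * w)
  replace hνl : ν.length = cs.length (cs.simple j * w) := by rw [hνw]; exact hνl.symm
  have hπ : cs.wordProd (j :: ν) = w := by
    rw [cs.wordProd_cons, ← hνw]
    simp
  have hlt' : cs.length (cs.wordProd (j :: ν) * cs.simple i) < cs.length (cs.wordProd (j :: ν)) := by
    rw [hπ]
    exact hi
  obtain ⟨r, hr, herase⟩ := exchange_right cs (cs.isReflection_simple i) (j :: ν) hlt'
  rw [hπ] at herase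
  match r, hr, herase with
  | 0, _, herase =>
    rw [List.eraseIdx_cons_zero, ← hνw] at herase
    exact herase.symm
  | (r' + 1), hr, herase =>
    exfalso
    rw [List.eraseIdx_cons_succ, cs.wordProd_cons] at herase
    have h1 : cs.simple j * w * cs.simple i = cs.wordProd (ν.eraseIdx r') := by
      rw [mul_assoc, herase, ← mul_assoc]
      simp
    have h2 : cs.length (cs.simple j * w * cs.simple i) ≤ ν.length - 1 := by
      rw [h1]
      have h3 := cs.length_wordProd_le (ν.eraseIdx r')
      have h4 : r' < ν.length := by
        simp only [List.length_cons] at hr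
        omega
      rw [List.length_eraseIdx_of_lt h4] at h3
      exact h3
    have h5 : 0 < cs.length w := by omega
    omega

/-- Additivity of lengths on a coset of a standard parabolic subgroup with
respect to an element of minimal length in the "coset" `P * w₁`. -/
theorem coset_min_add {w₁ : W}
    (hmin : ∀ u ∈ Subgroup.closure (cs.simple '' T), cs.length w₁ ≤ cs.length (u * w₁)) :
    ∀ u ∈ Subgroup.closure (cs.simple '' T), cs.length (u * w₁) = cs.length u + cs.length w₁ := by
  have key : ∀ (n : ℕ) (u : W), u ∈ Subgroup.closure (cs.simple '' T) → cs.length u = n →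
      cs.length (u * w₁) = n + cs.length w₁ := by
    intro n
    induction n using Nat.strong_induction_on with
    | _ n ih =>
      intro u hu hlen
      rcases Nat.eq_zero_or_pos n with h0 | h0
      · have : u = 1 := by
          rw [← cs.length_eq_zero_iff, hlen, h0]
        rw [this, one_mul, h0, zero_add]
      · have hune : u ≠ 1 := by
          intro h
          rw [h] at hlen
          simp at hlen
          omega
        obtain ⟨l, hlT, hlw, hlred⟩ := exists_reduced_TWord cs T hu
        match l, hlT, hlw, hlred with
        | [], _, hlw, _ => exact absurd (by simpa using hlw.symm) hune
        | i :: l', hlT, hlw, hlred =>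
          have hiT : i ∈ T := hlT i (List.mem_cons_self)
          set u' := cs.wordProd l' with hu'
          have hredl' : cs.IsReduced l' := by
            have := CoxeterSystem.IsReduced.drop hlred 1
            simpa using this
          have hul : cs.length u = l'.length + 1 := by
            rw [← hlw, hlred]
            simp
          have hu'len : cs.length u' = l'.length := hredl'
          have hu'mem : u' ∈ Subgroup.closure (cs.simple '' T) :=
            (mem_closure_iff_TWord cs T).mpr
              ⟨l', fun i hi => hlT i (List.mem_cons_of_mem _ hi), rfl⟩
          have husu : u = cs.simple i * u' := by
            rw [← hlw, cs.wordProd_cons]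
          have hIH : cs.length (u' * w₁) = l'.length + cs.length w₁ :=
            ih l'.length (by omega) u' hu'mem hu'len
          rcases cs.length_simple_mul (u' * w₁) i with h | h
          · rw [husu, mul_assoc, h, hIH]
            omega
          · exfalso
            obtain ⟨ν, hνl, hνw⟩ := cs.exists_reduced_word w₁
            replace hνl : ν.length = cs.length w₁ := by rw [hνw]; exact hνl.symm
            have hπ : cs.wordProd (l' ++ ν) = u' * w₁ := by
              rw [cs.wordProd_append, ← hνw]
            have hlt : cs.length (cs.simple i * cs.wordProd (l' ++ ν))
                < cs.length (cs.wordProd (l' ++ ν)) := by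
              rw [hπ]
              omega
            obtain ⟨k, hk, herase⟩ := exchange_left cs (cs.isReflection_simple i) (l' ++ ν) hlt
            rw [hπ] at herase
            rcases Nat.lt_or_ge k l'.length with hkl | hkl
            · rw [List.eraseIdx_append_of_lt_length hkl, cs.wordProd_append, ← hνw] at herase
              have herase2 : cs.simple i * u' * w₁ = cs.wordProd (l'.eraseIdx k) * w₁ := by
                rw [mul_assoc]
                exact herase
              have h1 : cs.simple i * u' = cs.wordProd (l'.eraseIdx k) :=
                mul_right_cancel herase2
              have h2 : cs.length (cs.simple i * u') ≤ l'.length - 1 := by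
                rw [h1]
                have h3 := cs.length_wordProd_le (l'.eraseIdx k)
                rwa [List.length_eraseIdx_of_lt hkl] at h3
              have h4 : cs.length (cs.simple i * u') = cs.length u := by rw [husu]
              omega
            · rw [List.eraseIdx_append_of_length_le hkl, cs.wordProd_append, ← hu'] at herase
              set k₂ := k - l'.length with hk₂
              have hk₂ν : k₂ < ν.length := by
                rw [List.length_append] at hk
                omega
              have h1 : cs.wordProd (ν.eraseIdx k₂) = (u'⁻¹ * cs.simple i * u') * w₁ := by
                calc cs.wordProd (ν.eraseIdx k₂)
                    = u'⁻¹ * (u' * cs.wordProd (ν.eraseIdx k₂)) := by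
                      rw [inv_mul_cancel_left]
                  _ = u'⁻¹ * (cs.simple i * (u' * w₁)) := by rw [← herase]
                  _ = (u'⁻¹ * cs.simple i * u') * w₁ := by simp [mul_assoc]
              have h2 : u'⁻¹ * cs.simple i * u' ∈ Subgroup.closure (cs.simple '' T) := by
                refine mul_mem (mul_mem (inv_mem hu'mem) ?_) hu'mem
                exact Subgroup.subset_closure ⟨i, hiT, rfl⟩
              have h3 := hmin _ h2
              rw [← h1] at h3
              have h4 := cs.length_wordProd_le (ν.eraseIdx k₂)
              rw [List.length_eraseIdx_of_lt hk₂ν, hνl] at h4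
              omega
  intro u hu
  exact key (cs.length u) u hu rfl

end BuildingGate

/-- Let `Δ` be a building of type `(W, S)`, `R` a `T`-residue in `Δ` and `C₀`
any chamber of `Δ`. Then there is a unique chamber `C ∈ R` such that
`ℓ(δ C C₀) ≤ ℓ(δ D C₀)` for every `D ∈ R`; this `C` is the projection (gate) of `C₀` onto `R`. -/
theorem exists_unique_projection_onto_residue {B : Type*} {W : Type*} [Group W]
    {M : CoxeterMatrix B} (cs : CoxeterSystem M W)
    {Δ : Type*} [Nonempty Δ] (δ : Δ → Δ → W)
    (hWD1 : ∀ C D : Δ, δ C D = 1 ↔ C = D)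
    (hWD2 : ∀ (C C' D : Δ) (i : B), δ C' C = cs.simple i →
      (δ C' D = cs.simple i * δ C D ∨ δ C' D = δ C D) ∧
      (cs.length (cs.simple i * δ C D) = cs.length (δ C D) + 1 →
        δ C' D = cs.simple i * δ C D))
    (hWD3 : ∀ (C D : Δ) (i : B), ∃ C' : Δ,
      δ C' C = cs.simple i ∧ δ C' D = cs.simple i * δ C D)
    (T : Set B) (C₁ : Δ)
    (R : Set Δ) (hR : R = {D : Δ | δ C₁ D ∈ Subgroup.closure (cs.simple '' T)})
    (C₀ : Δ) :
    ∃! C : Δ, C ∈ R ∧ ∀ D ∈ R, cs.length (δ C C₀) ≤ cs.length (δ D C₀) := by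
  classical
  -- basic consequences of the axioms
  have L0 : ∀ C : Δ, δ C C = 1 := fun C => (hWD1 C C).mpr rfl
  have hsne : ∀ i : B, cs.simple i ≠ 1 := by
    intro i h
    have h2 := cs.length_simple i
    rw [h] at h2
    simp at h2
  have L1 : ∀ (C C' : Δ) (i : B), δ C' C = cs.simple i → δ C C' = cs.simple i := by
    intro C C' i h
    rcases (hWD2 C C' C' i h).1 with h1 | h1
    · rw [L0] at h1
      have h2 := (inv_eq_of_mul_eq_one_right h1.symm).symm
      rwa [cs.inv_simple] at h2
    · rw [L0] at h1
      exfalso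
      have hCC' : C = C' := (hWD1 C C').mp h1.symm
      rw [hCC', L0] at h
      exact hsne i h.symm
  -- the "right" version of axiom WD2, proved by induction on length
  have R2 : ∀ n (C D D' : Δ) (i : B), cs.length (δ C D) = n → δ D' D = cs.simple i →
      (δ C D' = δ C D * cs.simple i ∨ δ C D' = δ C D) ∧
      (cs.length (δ C D * cs.simple i) = cs.length (δ C D) + 1 →
        δ C D' = δ C D * cs.simple i) := by
    intro n
    induction n using Nat.strong_induction_on with
    | _ n ihn =>
    intro C D D' i hn hDD'
    rcases eq_or_ne (δ C D) 1 with h1 | h1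
    · have hCD : C = D := (hWD1 C D).mp h1
      subst hCD
      have h2 : δ C D' = cs.simple i := L1 C D' i hDD'
      rw [h1, h2]
      exact ⟨Or.inl (one_mul _).symm, fun _ => (one_mul _).symm⟩
    · obtain ⟨j, hj⟩ := cs.exists_leftDescent_of_ne_one h1
      have hjlt : cs.length (cs.simple j * (δ C D)) < cs.length (δ C D) := hj
      have hj' : cs.length (cs.simple j * (δ C D)) + 1 = cs.length (δ C D) := by
        rcases cs.length_simple_mul (δ C D) j with h | h
        · omega
        · exact h
      have ha1 : 1 ≤ cs.length (δ C D) := by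
        have h2 : cs.length (δ C D) ≠ 0 := fun h => h1 (cs.length_eq_zero_iff.mp h)
        omega
      obtain ⟨C', hC'C, hC'D⟩ := hWD3 C D j
      have hCC' : δ C C' = cs.simple j := L1 C C' j hC'C
      have hlen' : cs.length (δ C' D) < n := by rw [hC'D]; omega
      have IH := ihn (cs.length (δ C' D)) hlen' C' D D' i rfl hDD'
      have IH1 := IH.1
      have IH2 := IH.2
      rw [hC'D] at IH1 IH2
      have W2 := hWD2 C' C D' j hCC'
      have W21 := W2.1
      have W22 := W2.2
      rcases IH1 with hA | hB
      · -- Case A : δ C' D' = s j * (δ C D) * s i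
        rw [hA] at W21 W22
        have hcan : cs.simple j * (cs.simple j * (δ C D) * cs.simple i) = (δ C D) * cs.simple i := by
          simp [mul_assoc]
        rw [hcan] at W21 W22
        have hdi := cs.length_simple_mul (cs.simple j * (δ C D) * cs.simple i) j
        rw [hcan] at hdi
        rcases hdi with hB1 | hB2
        · -- forced case
          have hforce := W22 hB1
          exact ⟨Or.inl hforce, fun _ => hforce⟩
        · -- the dihedral case
          have hle : cs.length (cs.simple j * (δ C D) * cs.simple i)
              ≤ cs.length (cs.simple j * (δ C D)) + 1 := by
            have h2 := cs.length_mul_le (cs.simple j * (δ C D)) (cs.simple i)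
            rwa [cs.length_simple] at h2
          have hi : cs.length ((δ C D) * cs.simple i) + 1 = cs.length (δ C D) := by
            rcases cs.length_mul_simple (δ C D) i with h | h
            · omega
            · exact h
          have hij : cs.length (cs.simple j * (δ C D) * cs.simple i) = cs.length (δ C D) := by
            omega
          have hX : cs.simple j * (δ C D) = (δ C D) * cs.simple i :=
            BuildingGate.lemX cs hjlt (by omega) hij
          have hy : cs.simple j * (δ C D) * cs.simple i = (δ C D) := by
            rw [hX]
            simp [mul_assoc]
          rw [hy] at W21
          constructor
          · rcases W21 with h2 | h2
            · exact Or.inl h2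
            · exact Or.inr h2
          · intro hF
            exfalso
            omega
      · -- Case B : δ C' D' = s j * (δ C D)
        rw [hB] at W21 W22
        have hcan2 : cs.simple j * (cs.simple j * (δ C D)) = (δ C D) := by simp [mul_assoc]
        rw [hcan2] at W21 W22
        have hCD' : δ C D' = (δ C D) := W22 (by omega)
        refine ⟨Or.inr hCD', ?_⟩
        intro hF
        exfalso
        have h3 : cs.length (cs.simple j * (δ C D) * cs.simple i) + 1
            = cs.length (cs.simple j * (δ C D)) := by
          rcases cs.length_mul_simple (cs.simple j * (δ C D)) i with h | h
          · exfalso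
            have heq := hB.symm.trans (IH2 h)
            have h5 : (cs.simple j * (δ C D)) * 1 = (cs.simple j * (δ C D)) * cs.simple i := by
              rw [mul_one]
              exact heq
            have h6 := mul_left_cancel h5
            exact hsne i h6.symm
          · exact h
        have h6 : (δ C D) * cs.simple i = cs.simple j * (cs.simple j * (δ C D) * cs.simple i) := by
          simp [mul_assoc]
        have h7 := cs.length_mul_le (cs.simple j) (cs.simple j * (δ C D) * cs.simple i)
        rw [cs.length_simple, ← h6] at h7
        omega
  -- symmetry of the Weyl distance
  have Inv : ∀ n (C D : Δ), cs.length (δ C D) = n → δ D C = (δ C D)⁻¹ := by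
    intro n
    induction n using Nat.strong_induction_on with
    | _ n ihn =>
    intro C D hn
    rcases eq_or_ne (δ C D) 1 with h1 | h1
    · have hCD : C = D := (hWD1 C D).mp h1
      subst hCD
      rw [h1, inv_one]
    · obtain ⟨j, hj⟩ := cs.exists_leftDescent_of_ne_one h1
      have hjlt : cs.length (cs.simple j * δ C D) < cs.length (δ C D) := hj
      obtain ⟨C', hC'C, hC'D⟩ := hWD3 C D j
      have hCC' : δ C C' = cs.simple j := L1 C C' j hC'C
      have hlen' : cs.length (δ C' D) < n := by rw [hC'D]; omega
      have hIH : δ D C' = (δ C' D)⁻¹ := ihn _ hlen' C' D rfl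
      have hR2 := (R2 (cs.length (δ D C')) D C' C j rfl hCC').2
      have h2 : δ D C' * cs.simple j = (δ C D)⁻¹ := by
        rw [hIH, hC'D, mul_inv_rev, cs.inv_simple, mul_assoc]
        simp
      have hj' : cs.length (cs.simple j * δ C D) + 1 = cs.length (δ C D) := by
        rcases cs.length_simple_mul (δ C D) j with h | h
        · omega
        · exact h
      have h3 : cs.length (δ D C' * cs.simple j) = cs.length (δ D C') + 1 := by
        rw [h2, cs.length_inv, hIH, hC'D, cs.length_inv]
        omega
      rw [hR2 h3, h2]
  -- membership facts for the residue
  have hsimpleP : ∀ i ∈ T, cs.simple i ∈ Subgroup.closure (cs.simple '' T) :=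
    fun i hi => Subgroup.subset_closure ⟨i, hi, rfl⟩
  have hC₁R : C₁ ∈ R := by
    rw [hR]
    simp only [Set.mem_setOf_eq]
    rw [L0 C₁]
    exact one_mem _
  have memflip : ∀ D : Δ, D ∈ R ↔ δ D C₁ ∈ Subgroup.closure (cs.simple '' T) := by
    intro D
    rw [hR, Set.mem_setOf_eq]
    have hinv : δ D C₁ = (δ C₁ D)⁻¹ := Inv _ C₁ D rfl
    rw [hinv, inv_mem_iff]
  -- every chamber of the residue sees every chamber through the parabolic subgroup
  have RPgen : ∀ n (D : Δ), cs.length (δ D C₁) = n →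
      δ D C₁ ∈ Subgroup.closure (cs.simple '' T) →
      ∀ E : Δ, ∃ u ∈ Subgroup.closure (cs.simple '' T), δ D E = u * δ C₁ E := by
    intro n
    induction n using Nat.strong_induction_on with
    | _ n ihn =>
    intro D hn hmem E
    rcases eq_or_ne (δ D C₁) 1 with h1 | h1
    · have h2 : D = C₁ := (hWD1 D C₁).mp h1
      subst h2
      exact ⟨1, one_mem _, by rw [one_mul]⟩
    · obtain ⟨i, hiT, hdesc⟩ := BuildingGate.descent_T cs T hmem h1
      obtain ⟨D', hD'D, hD'C₁⟩ := hWD3 D C₁ i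
      have hmem' : δ D' C₁ ∈ Subgroup.closure (cs.simple '' T) := by
        rw [hD'C₁]
        exact mul_mem (hsimpleP i hiT) hmem
      have hlen' : cs.length (δ D' C₁) < n := by rw [hD'C₁]; omega
      obtain ⟨u', hu'mem, hu'⟩ := ihn _ hlen' D' rfl hmem' E
      have hDD' : δ D D' = cs.simple i := L1 D D' i hD'D
      rcases (hWD2 D' D E i hDD').1 with h2 | h2
      · exact ⟨cs.simple i * u', mul_mem (hsimpleP i hiT) hu'mem,
          by rw [h2, hu', mul_assoc]⟩
      · exact ⟨u', hu'mem, by rw [h2, hu']⟩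
  -- choose a chamber of the residue of minimal distance to C₀
  have hSne : ∃ n : ℕ, ∃ D, D ∈ R ∧ cs.length (δ D C₀) = n := ⟨_, C₁, hC₁R, rfl⟩
  obtain ⟨C, hCR, hCl⟩ := Nat.find_spec hSne
  have hCmin : ∀ D ∈ R, cs.length (δ C C₀) ≤ cs.length (δ D C₀) := by
    intro D hD
    rw [hCl]
    exact Nat.find_min' hSne ⟨D, hD, rfl⟩
  -- every element of the coset P · δ C₁ C₀ is realized by a chamber of the residue
  have Surj : ∀ l : List B, (∀ i ∈ l, i ∈ T) →
      ∃ D, D ∈ R ∧ δ D C₀ = cs.wordProd l * δ C₁ C₀ := by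
    intro l hl
    induction l with
    | nil => exact ⟨C₁, hC₁R, by rw [cs.wordProd_nil, one_mul]⟩
    | cons i l ih =>
      obtain ⟨D', hD'R, hD'⟩ := ih (fun i' hi' => hl i' (List.mem_cons_of_mem _ hi'))
      obtain ⟨D, hDD', hDC₀⟩ := hWD3 D' C₀ i
      have hiT : i ∈ T := hl i (List.mem_cons_self)
      have hDD'2 : δ D D' = cs.simple i := hDD'
      refine ⟨D, ?_, ?_⟩
      · rw [memflip D]
        rcases (hWD2 D' D C₁ i hDD'2).1 with h3 | h3
        · rw [h3]
          exact mul_mem (hsimpleP i hiT) ((memflip D').mp hD'R)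
        · rw [h3]
          exact (memflip D').mp hD'R
      · rw [hDC₀, hD', cs.wordProd_cons, mul_assoc]
  -- minimality of `δ C C₀` in its coset
  obtain ⟨uC, huCmem, huC⟩ := RPgen (cs.length (δ C C₁)) C rfl ((memflip C).mp hCR) C₀
  have hmin : ∀ u ∈ Subgroup.closure (cs.simple '' T),
      cs.length (δ C C₀) ≤ cs.length (u * δ C C₀) := by
    intro u hu
    obtain ⟨l, hlT, hlu⟩ := (BuildingGate.mem_closure_iff_TWord cs T).mp (mul_mem hu huCmem)
    obtain ⟨D, hDR, hD⟩ := Surj l hlT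
    have h2 : u * δ C C₀ = δ D C₀ := by rw [hD, hlu, huC, mul_assoc]
    rw [h2]
    exact hCmin D hDR
  have hadd := BuildingGate.coset_min_add cs T hmin
  -- the gate property
  have G : ∀ n (D : Δ), cs.length (δ D C) = n →
      δ D C ∈ Subgroup.closure (cs.simple '' T) → δ D C₀ = δ D C * δ C C₀ := by
    intro n
    induction n using Nat.strong_induction_on with
    | _ n ihn =>
    intro D hn hmem
    rcases eq_or_ne (δ D C) 1 with h1 | h1
    · have h2 : D = C := (hWD1 D C).mp h1
      subst h2
      rw [h1, one_mul]
    · obtain ⟨i, hiT, hdesc⟩ := BuildingGate.descent_T cs T hmem h1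
      obtain ⟨D', hD'D, hD'C⟩ := hWD3 D C i
      have hmem' : δ D' C ∈ Subgroup.closure (cs.simple '' T) := by
        rw [hD'C]
        exact mul_mem (hsimpleP i hiT) hmem
      have hlen' : cs.length (δ D' C) < n := by rw [hD'C]; omega
      have hIH : δ D' C₀ = δ D' C * δ C C₀ := ihn _ hlen' D' rfl hmem'
      have hDD' : δ D D' = cs.simple i := L1 D D' i hD'D
      have hforce := (hWD2 D' D C₀ i hDD').2
      have hkey : cs.simple i * δ D' C₀ = δ D C * δ C C₀ := by
        rw [hIH, hD'C, ← mul_assoc]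
        congr 1
        simp [mul_assoc]
      have hlens : cs.length (cs.simple i * δ D' C₀) = cs.length (δ D' C₀) + 1 := by
        rw [hkey, hIH, hadd _ hmem, hadd _ hmem', hD'C]
        omega
      rw [hforce hlens, hkey]
  -- conclusion
  refine ⟨C, ⟨hCR, hCmin⟩, ?_⟩
  rintro C' ⟨hC'R, hC'min⟩
  obtain ⟨v, hvmem, hv⟩ := RPgen (cs.length (δ C' C₁)) C' rfl ((memflip C').mp hC'R) C
  have hδC₁C : δ C₁ C ∈ Subgroup.closure (cs.simple '' T) := by
    rw [hR] at hCR
    exact hCR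
  have hC'Cmem : δ C' C ∈ Subgroup.closure (cs.simple '' T) := by
    rw [hv]
    exact mul_mem hvmem hδC₁C
  have hG := G (cs.length (δ C' C)) C' rfl hC'Cmem
  have h1 : cs.length (δ C' C₀) = cs.length (δ C' C) + cs.length (δ C C₀) := by
    rw [hG]
    exact hadd _ hC'Cmem
  have h2 : cs.length (δ C' C₀) ≤ cs.length (δ C C₀) := hC'min C hCR
  have h3 : cs.length (δ C' C) = 0 := by omega
  exact (hWD1 C' C).mp (cs.length_eq_zero_iff.mp h3)
end

section
/- Let I be a finite index type and for each i ∈ I let M_i : CoxeterMatrix (B i) be a Coxeter matrix with Coxeter system cs_i : CoxeterSystem M_i (W i). Define the Coxeter matrix M over Σ i, B i by M ⟨i,a⟩ ⟨i,b⟩ = M_i a b and M ⟨i,a⟩ ⟨j,b⟩ = 2 whenever i ≠ j. Then the direct product ∏ i, W i admits a Coxeter system of matrix M whose simple reflection at ⟨i,b⟩ is Pi.mulSingle i (cs_i.simple b) (the element equal to cs_i.simple b in the i-th coordinate and 1 elsewhere). -/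
/-- Let `I` be a finite index type and, for each `i`, let
`M i : CoxeterMatrix (B i)` be a Coxeter matrix with Coxeter system `cs i` on the group `W i`.
Let `Mp` be the Coxeter matrix over `Σ i, B i` with `Mp ⟨i,a⟩ ⟨i,b⟩ = M i a b` and
`Mp ⟨i,a⟩ ⟨j,b⟩ = 2` whenever `i ≠ j`. Then the direct product `∀ i, W i` admits a Coxeter
system of matrix `Mp` whose simple reflection at `⟨i, b⟩` is `Pi.mulSingle i ((cs i).simple b)`
(the element equal to `(cs i).simple b` in the `i`-th coordinate and `1` elsewhere). -/
theorem product_of_coxeter_systems {I : Type*} [Fintype I] [DecidableEq I]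
    {B : I → Type*} {M : ∀ i, CoxeterMatrix (B i)}
    {W : I → Type*} [∀ i, Group (W i)] (cs : ∀ i, CoxeterSystem (M i) (W i))
    (Mp : CoxeterMatrix (Σ i, B i))
    (hdiag : ∀ (i : I) (a b : B i), Mp ⟨i, a⟩ ⟨i, b⟩ = M i a b)
    (hoff : ∀ (i j : I) (a : B i) (b : B j), i ≠ j → Mp ⟨i, a⟩ ⟨j, b⟩ = 2) :
    ∃ csp : CoxeterSystem Mp (∀ i, W i),
      ∀ (i : I) (b : B i), csp.simple ⟨i, b⟩ = Pi.mulSingle i ((cs i).simple b) := by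
  classical
  set csMp := Mp.toCoxeterSystem with hcsMp
  -- the target simple reflections in the product group
  set t : (Σ i, B i) → (∀ i, W i) := fun p => Pi.mulSingle p.1 ((cs p.1).simple p.2) with ht
  -- liftability of `t`
  have htlift : Mp.IsLiftable t := by
    rintro ⟨i, a⟩ ⟨j, b⟩
    rcases eq_or_ne i j with rfl | hij
    · rw [hdiag, ht]
      simp only [← Pi.mulSingle_mul]
      rw [← Pi.mulSingle_pow, (cs i).simple_mul_simple_pow, Pi.mulSingle_one]
    · rw [hoff i j a b hij, ht]
      have hc : Commute (Pi.mulSingle i ((cs i).simple a) : ∀ i, W i)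
          (Pi.mulSingle j ((cs j).simple b)) := Pi.mulSingle_commute hij _ _
      rw [hc.mul_pow, ← Pi.mulSingle_pow, ← Pi.mulSingle_pow,
        (cs i).simple_sq, (cs j).simple_sq, Pi.mulSingle_one, Pi.mulSingle_one, one_mul]
  -- the homomorphism from the Coxeter group of `Mp` to the product
  set f : Mp.Group →* (∀ i, W i) := csMp.lift ⟨t, htlift⟩ with hf
  have hfs : ∀ p, f (csMp.simple p) = t p := fun p => csMp.lift_apply_simple htlift p
  -- for each `i`, a homomorphism `W i →* Mp.Group`
  have hglift : ∀ i : I, (M i).IsLiftable (fun b => csMp.simple ⟨i, b⟩) := by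
    intro i a b
    rw [← hdiag i a b]
    exact csMp.simple_mul_simple_pow ⟨i, a⟩ ⟨i, b⟩
  set φ : ∀ i : I, W i →* Mp.Group := fun i => (cs i).lift ⟨_, hglift i⟩ with hφ
  have hφs : ∀ (i : I) (b : B i), φ i ((cs i).simple b) = csMp.simple ⟨i, b⟩ :=
    fun i b => (cs i).lift_apply_simple (hglift i) b
  -- commuting simples at distinct indices
  have hsimplecomm : ∀ (i j : I), i ≠ j → ∀ (a : B i) (b : B j),
      Commute (csMp.simple ⟨i, a⟩) (csMp.simple ⟨j, b⟩) := by
    intro i j hij a b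
    have h2 : (csMp.simple ⟨i, a⟩ * csMp.simple ⟨j, b⟩) ^ 2 = 1 := by
      rw [← hoff i j a b hij]; exact csMp.simple_mul_simple_pow _ _
    have := sq (csMp.simple ⟨i, a⟩ * csMp.simple ⟨j, b⟩) ▸ h2
    unfold Commute SemiconjBy
    calc csMp.simple ⟨i, a⟩ * csMp.simple ⟨j, b⟩
        = (csMp.simple ⟨i, a⟩ * csMp.simple ⟨j, b⟩)⁻¹ := by
          rw [eq_inv_iff_mul_eq_one]; exact this
      _ = (csMp.simple ⟨j, b⟩)⁻¹ * (csMp.simple ⟨i, a⟩)⁻¹ := mul_inv_rev _ _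
      _ = csMp.simple ⟨j, b⟩ * csMp.simple ⟨i, a⟩ := by
          rw [csMp.inv_simple, csMp.inv_simple]
  have hcomm : Pairwise fun i j => ∀ (x : W i) (y : W j), Commute (φ i x) (φ j y) := by
    intro i j hij x y
    induction x using (cs i).simple_induction with
    | one => simp [Commute.one_left]
    | mul w w' hw hw' => rw [map_mul]; exact hw.mul_left hw'
    | simple a =>
      induction y using (cs j).simple_induction with
      | one => simp [Commute.one_right]
      | mul w w' hw hw' => rw [map_mul]; exact hw.mul_right hw'
      | simple b => rw [hφs, hφs]; exact hsimplecomm i j hij a b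
  set g : (∀ i, W i) →* Mp.Group := MonoidHom.noncommPiCoprod φ hcomm with hg
  have hgsingle : ∀ (i : I) (x : W i), g (Pi.mulSingle i x) = φ i x := by
    intro i x; exact MonoidHom.noncommPiCoprod_mulSingle φ i x
  -- f ∘ g = id
  have hfg : f.comp g = MonoidHom.id _ := by
    apply MonoidHom.pi_ext
    intro i x
    have : f.comp (φ i) = MonoidHom.mulSingle W i := by
      apply (cs i).ext_simple
      intro b
      simp only [MonoidHom.comp_apply, hφs, hfs, MonoidHom.mulSingle_apply, ht]
    calc f.comp g (Pi.mulSingle i x) = f (φ i x) := by rw [MonoidHom.comp_apply, hgsingle]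
      _ = Pi.mulSingle i x := by
          rw [← MonoidHom.comp_apply, this, MonoidHom.mulSingle_apply]
      _ = MonoidHom.id _ (Pi.mulSingle i x) := rfl
  -- g ∘ f = id
  have hgf : g.comp f = MonoidHom.id _ := by
    apply csMp.ext_simple
    rintro ⟨i, b⟩
    rw [MonoidHom.comp_apply, hfs, ht]
    simp only []
    rw [hgsingle, hφs, MonoidHom.id_apply]
  -- assemble the mul equiv
  set e : (∀ i, W i) ≃* Mp.Group := MonoidHom.toMulEquiv g f hfg hgf with he
  refine ⟨⟨e⟩, fun i b => ?_⟩
  show e.symm (PresentedGroup.of ⟨i, b⟩) = _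
  have : e.symm (PresentedGroup.of ⟨i, b⟩) = f (csMp.simple ⟨i, b⟩) := rfl
  rw [this, hfs]
end

section
/- Let I be a finite index type and for each i ∈ I let Δ_i be a building of type (W_i, S_i) with distance function δ_i. Equip ∏ i, W_i with the Coxeter system of the block Coxeter matrix M over Σ i, B i (M restricted to each B i equals M_i, all entries between different blocks equal 2) whose simple reflection at ⟨i,b⟩ is Pi.mulSingle i ((cs_i).simple b). Then the product ∏ i, Δ_i with the componentwise distance δ C D = (fun i => δ_i (C i) (D i)) is a building of type (∏ i, W_i, S): it satisfies axioms (WD1), (WD2) and (WD3) with respect to this Coxeter system. -/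
theorem product_length_eq {I : Type*} [Fintype I] [DecidableEq I]
    {B : I → Type*} {M : ∀ i, CoxeterMatrix (B i)}
    {W : I → Type*} [∀ i, Group (W i)] (cs : ∀ i, CoxeterSystem (M i) (W i))
    {Mp : CoxeterMatrix (Σ i, B i)} (csp : CoxeterSystem Mp (∀ i, W i))
    (hsimple : ∀ (i : I) (b : B i), csp.simple ⟨i, b⟩ = Pi.mulSingle i ((cs i).simple b))
    (w : ∀ i, W i) :
    csp.length w = ∑ i, (cs i).length (w i) := by
  have upper : ∀ (n : ℕ) (w : ∀ i, W i), ∑ i, (cs i).length (w i) = n →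
      csp.length w ≤ n := by
    intro n
    induction n with
    | zero =>
      intro w hw
      have : ∀ i, (cs i).length (w i) = 0 := by
        intro i
        have := Finset.sum_eq_zero_iff.mp hw i (Finset.mem_univ i)
        exact this
      have hw1 : w = 1 := by
        funext i
        exact ((cs i).length_eq_zero_iff).mp (this i)
      simp [hw1]
    | succ n ih =>
      intro w hw
      have hne : ∃ j : I, w j ≠ 1 := by
        by_contra h
        push_neg at h
        have : ∀ i, (cs i).length (w i) = 0 := fun i => by simp [h i]
        simp [Finset.sum_congr rfl (fun i _ => this i)] at hw
      obtain ⟨j, hj⟩ := hne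
      obtain ⟨b, hd⟩ := (cs j).exists_leftDescent_of_ne_one hj
      rw [CoxeterSystem.isLeftDescent_iff] at hd
      set w' := csp.simple ⟨j, b⟩ * w with hw'def
      have hcomp : ∀ i : I, i ≠ j → w' i = w i := by
        intro i hij
        simp [hw'def, hsimple, Pi.mulSingle_eq_of_ne hij]
      have hjcomp : w' j = (cs j).simple b * w j := by
        simp [hw'def, hsimple]
      have hsum' : ∑ i, (cs i).length (w' i) = n := by
        rw [← Finset.add_sum_erase _ _ (Finset.mem_univ j)] at hw ⊢
        rw [Finset.sum_congr rfl (fun i hi => by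
          rw [hcomp i (Finset.ne_of_mem_erase hi)]), hjcomp]
        omega
      have hIH := ih w' hsum'
      have : w = csp.simple ⟨j, b⟩ * w' := by
        rw [hw'def, CoxeterSystem.simple_mul_simple_cancel_left]
      calc csp.length w = csp.length (csp.simple ⟨j, b⟩ * w') := by rw [← this]
        _ ≤ csp.length (csp.simple ⟨j, b⟩) + csp.length w' := csp.length_mul_le _ _
        _ ≤ 1 + n := by
            rw [CoxeterSystem.length_simple]
            omega
        _ = n + 1 := by omega
  have lower : ∀ (n : ℕ) (w : ∀ i, W i), csp.length w = n →
      ∑ i, (cs i).length (w i) ≤ n := by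
    intro n
    induction n with
    | zero =>
      intro w hw
      rw [CoxeterSystem.length_eq_zero_iff] at hw
      subst hw
      have : ∀ i, (cs i).length ((1 : ∀ i, W i) i) = 0 := fun i => by simp
      simp [Finset.sum_congr rfl (fun i _ => this i)]
    | succ n ih =>
      intro w hw
      have hne : w ≠ 1 := by
        intro h; subst h; simp at hw
      obtain ⟨⟨j, b⟩, hd⟩ := csp.exists_leftDescent_of_ne_one hne
      rw [CoxeterSystem.isLeftDescent_iff] at hd
      set w' := csp.simple ⟨j, b⟩ * w with hw'def
      have hlen' : csp.length w' = n := by omega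
      have hIH := ih w' hlen'
      have hcomp : ∀ i : I, i ≠ j → w' i = w i := by
        intro i hij
        simp [hw'def, hsimple, Pi.mulSingle_eq_of_ne hij]
      have hjcomp : w' j = (cs j).simple b * w j := by
        simp [hw'def, hsimple]
      have hjle : (cs j).length (w j) ≤ (cs j).length (w' j) + 1 := by
        have heq : w j = (cs j).simple b * w' j := by
          rw [hjcomp, CoxeterSystem.simple_mul_simple_cancel_left]
        rw [heq]
        have := (cs j).length_mul_le ((cs j).simple b) (w' j)
        rw [CoxeterSystem.length_simple] at this
        omega
      rw [← Finset.add_sum_erase _ _ (Finset.mem_univ j)]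
      rw [← Finset.add_sum_erase _ (fun i => (cs i).length (w' i)) (Finset.mem_univ j)] at hIH
      have : ∑ i ∈ Finset.univ.erase j, (cs i).length (w i)
          = ∑ i ∈ Finset.univ.erase j, (cs i).length (w' i) := by
        exact Finset.sum_congr rfl (fun i hi => by rw [hcomp i (Finset.ne_of_mem_erase hi)])
      omega
  exact le_antisymm (upper _ w rfl) (lower _ w rfl)

/-- Let `I` be a finite index type and for each `i` let `Δ i` be a building of
type `(W i, S i)` with distance function `δ i`. Equip `∀ i, W i` with the Coxeter system `csp`
of the block Coxeter matrix `Mp` over `Σ i, B i` (on each block `B i` it equals `M i`, all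
entries between different blocks equal `2`), whose simple reflection at `⟨i, b⟩` is
`Pi.mulSingle i ((cs i).simple b)`. Then the product `∀ i, Δ i` with the componentwise distance
`δP C D = fun i => δ i (C i) (D i)` is a building of type `(∀ i, W i, S)`: it satisfies the
building axioms (WD1), (WD2) and (WD3) with respect to `csp`. -/
theorem product_of_buildings_is_building {I : Type*} [Fintype I] [DecidableEq I]
    {B : I → Type*} {M : ∀ i, CoxeterMatrix (B i)}
    {W : I → Type*} [∀ i, Group (W i)] (cs : ∀ i, CoxeterSystem (M i) (W i))
    {Δ : I → Type*} [∀ i, Nonempty (Δ i)] (δ : ∀ i, Δ i → Δ i → W i)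
    (hWD1 : ∀ (i : I) (C D : Δ i), δ i C D = 1 ↔ C = D)
    (hWD2 : ∀ (i : I) (C C' D : Δ i) (b : B i), δ i C' C = (cs i).simple b →
      (δ i C' D = (cs i).simple b * δ i C D ∨ δ i C' D = δ i C D) ∧
      ((cs i).length ((cs i).simple b * δ i C D) = (cs i).length (δ i C D) + 1 →
        δ i C' D = (cs i).simple b * δ i C D))
    (hWD3 : ∀ (i : I) (C D : Δ i) (b : B i), ∃ C' : Δ i,
      δ i C' C = (cs i).simple b ∧ δ i C' D = (cs i).simple b * δ i C D)
    (Mp : CoxeterMatrix (Σ i, B i))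
    (hdiag : ∀ (i : I) (a b : B i), Mp ⟨i, a⟩ ⟨i, b⟩ = M i a b)
    (hoff : ∀ (i j : I) (a : B i) (b : B j), i ≠ j → Mp ⟨i, a⟩ ⟨j, b⟩ = 2)
    (csp : CoxeterSystem Mp (∀ i, W i))
    (hsimple : ∀ (i : I) (b : B i), csp.simple ⟨i, b⟩ = Pi.mulSingle i ((cs i).simple b))
    (δP : (∀ i, Δ i) → (∀ i, Δ i) → (∀ i, W i))
    (hδP : ∀ (C D : ∀ i, Δ i) (i : I), δP C D i = δ i (C i) (D i)) :
    (∀ C D : ∀ i, Δ i, δP C D = 1 ↔ C = D) ∧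
    (∀ (C C' D : ∀ i, Δ i) (s : Σ i, B i), δP C' C = csp.simple s →
      (δP C' D = csp.simple s * δP C D ∨ δP C' D = δP C D) ∧
      (csp.length (csp.simple s * δP C D) = csp.length (δP C D) + 1 →
        δP C' D = csp.simple s * δP C D)) ∧
    (∀ (C D : ∀ i, Δ i) (s : Σ i, B i), ∃ C' : ∀ i, Δ i,
      δP C' C = csp.simple s ∧ δP C' D = csp.simple s * δP C D) := by
  refine ⟨?_, ?_, ?_⟩
  · -- WD1
    intro C D
    constructor
    · intro h
      funext i
      exact (hWD1 i (C i) (D i)).mp (by rw [← hδP C D i, h]; rfl)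
    · intro h
      subst h
      funext i
      rw [hδP]
      exact (hWD1 i (C i) (C i)).mpr rfl
  · -- WD2
    rintro C C' D ⟨j, b⟩ h
    -- componentwise facts about δP C' C
    have hcc : ∀ i : I, i ≠ j → C' i = C i := by
      intro i hij
      apply (hWD1 i (C' i) (C i)).mp
      rw [← hδP C' C i, h, hsimple, Pi.mulSingle_eq_of_ne hij]
    have hccj : δ j (C' j) (C j) = (cs j).simple b := by
      rw [← hδP C' C j, h, hsimple, Pi.mulSingle_eq_same]
    have hmulj : (csp.simple ⟨j, b⟩ * δP C D) j = (cs j).simple b * δ j (C j) (D j) := by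
      simp [hsimple, hδP]
    have hmul : ∀ i : I, i ≠ j → (csp.simple ⟨j, b⟩ * δP C D) i = δ i (C i) (D i) := by
      intro i hij
      simp [hsimple, hδP, Pi.mulSingle_eq_of_ne hij]
    constructor
    · rcases (hWD2 j (C j) (C' j) (D j) b hccj).1 with h1 | h1
      · left
        funext i
        by_cases hij : i = j
        · subst hij
          rw [hδP, hmulj, h1]
        · rw [hδP, hmul i hij, hcc i hij]
      · right
        funext i
        by_cases hij : i = j
        · subst hij
          rw [hδP, h1, hδP]
        · rw [hδP, hcc i hij, hδP]
    · intro hlen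
      have hlenj : (cs j).length ((cs j).simple b * δ j (C j) (D j))
          = (cs j).length (δ j (C j) (D j)) + 1 := by
        rw [product_length_eq cs csp hsimple, product_length_eq cs csp hsimple] at hlen
        rw [← Finset.add_sum_erase _ _ (Finset.mem_univ j),
          ← Finset.add_sum_erase _ (fun i => (cs i).length (δP C D i)) (Finset.mem_univ j)]
          at hlen
        have he : ∑ i ∈ Finset.univ.erase j, (cs i).length ((csp.simple ⟨j, b⟩ * δP C D) i)
            = ∑ i ∈ Finset.univ.erase j, (cs i).length (δP C D i) := by
          refine Finset.sum_congr rfl (fun i hi => ?_)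
          rw [hmul i (Finset.ne_of_mem_erase hi), hδP]
        rw [he] at hlen
        have hj' : (cs j).length ((csp.simple ⟨j, b⟩ * δP C D) j)
            = (cs j).length ((cs j).simple b * δ j (C j) (D j)) := by rw [hmulj]
        rw [hj', hδP] at hlen
        omega
      have := (hWD2 j (C j) (C' j) (D j) b hccj).2 hlenj
      funext i
      by_cases hij : i = j
      · subst hij
        rw [hδP, hmulj, this]
      · rw [hδP, hmul i hij, hcc i hij]
  · -- WD3
    rintro C D ⟨j, b⟩
    obtain ⟨Cj', h1, h2⟩ := hWD3 j (C j) (D j) b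
    refine ⟨Function.update C j Cj', ?_, ?_⟩
    · funext i
      rw [hδP, hsimple]
      by_cases hij : i = j
      · subst hij
        rw [Function.update_self, Pi.mulSingle_eq_same, h1]
      · rw [Function.update_of_ne hij, Pi.mulSingle_eq_of_ne hij]
        exact (hWD1 i (C i) (C i)).mpr rfl
    · funext i
      rw [hδP]
      by_cases hij : i = j
      · subst hij
        rw [Function.update_self, h2]
        simp [hsimple, hδP]
      · rw [Function.update_of_ne hij]
        simp [hsimple, hδP, Pi.mulSingle_eq_of_ne hij]
end

section
/- Let Γ be a simple graph on a vertex type I and for each i ∈ I let M_i : CoxeterMatrix (B i) be a Coxeter matrix with Coxeter group W_i = M_i.Group. Let M̃ be the Coxeter matrix over Σ i, B i defined by M̃ ⟨i,a⟩ ⟨i,b⟩ = M_i a b, M̃ ⟨i,a⟩ ⟨j,b⟩ = 2 if i ≠ j and {i,j} is an edge of Γ, and M̃ ⟨i,a⟩ ⟨j,b⟩ = 0 (encoding ∞) otherwise. Then the graph product Coxeter group M̃.Group is isomorphic to the quotient of the free product Monoid.CoprodI (fun i => W_i) by the normal closure of the set of commutators ⁅ι_i (s_a), ι_j (s_b)⁆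 taken over all edges {i,j} of Γ and all a ∈ B i, b ∈ B j, where ι_i denotes the canonical inclusion of W_i into the free product and s_a, s_b the simple reflections; moreover the isomorphism sends the simple reflection of M̃.Group indexed by ⟨i,a⟩ to the image of ι_i (s_a). -/
open scoped commutatorElement

/-- Let `Γ` be a simple graph on a vertex type `I` and for each `i` let
`M i : CoxeterMatrix (B i)` be a Coxeter matrix with Coxeter group `(M i).Group`. Let `Mt` be
the Coxeter matrix over `Σ i, B i` with `Mt ⟨i,a⟩ ⟨i,b⟩ = M i a b`, `Mt ⟨i,a⟩ ⟨j,b⟩ = 2` if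
`i ≠ j` and `{i, j}` is an edge of `Γ`, and `Mt ⟨i,a⟩ ⟨j,b⟩ = 0` (encoding `∞`) otherwise.
Then the graph product Coxeter group `Mt.Group` is isomorphic to the quotient of the free
product `Monoid.CoprodI (fun i => (M i).Group)` by the normal closure `N` of the set of
commutators `⁅ι i (s a), ι j (s b)⁆` over all edges `{i, j}` of `Γ` and all `a : B i`,
`b : B j`; moreover the isomorphism sends the simple reflection of `Mt.Group` indexed by
`⟨i, a⟩` to the image of `ι i (s a)` in the quotient. -/
theorem graph_product_of_coxeter_groups {I : Type*} (Γ : SimpleGraph I)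
    {B : I → Type*} (M : ∀ i, CoxeterMatrix (B i))
    (Mt : CoxeterMatrix (Σ i, B i))
    (hsame : ∀ (i : I) (a b : B i), Mt ⟨i, a⟩ ⟨i, b⟩ = M i a b)
    (hadj : ∀ (i j : I) (a : B i) (b : B j), i ≠ j → Γ.Adj i j → Mt ⟨i, a⟩ ⟨j, b⟩ = 2)
    (hnonadj : ∀ (i j : I) (a : B i) (b : B j), i ≠ j → ¬ Γ.Adj i j → Mt ⟨i, a⟩ ⟨j, b⟩ = 0)
    (N : Subgroup (Monoid.CoprodI (fun i => (M i).Group)))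
    (hN : N = Subgroup.normalClosure
      {x : Monoid.CoprodI (fun i => (M i).Group) |
        ∃ (i j : I) (a : B i) (b : B j), Γ.Adj i j ∧
          x = ⁅(Monoid.CoprodI.of ((M i).simple a) :
                  Monoid.CoprodI (fun i => (M i).Group)),
               (Monoid.CoprodI.of ((M j).simple b) :
                  Monoid.CoprodI (fun i => (M i).Group))⁆})
    [hNormal : N.Normal] :
    ∃ e : Mt.Group ≃* (Monoid.CoprodI (fun i => (M i).Group)) ⧸ N,
      ∀ (i : I) (a : B i),
        e (Mt.simple ⟨i, a⟩) =
          QuotientGroup.mk (Monoid.CoprodI.of (M := fun i => (M i).Group) ((M i).simple a)) := by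
  classical
  set G := Monoid.CoprodI (fun i => (M i).Group) with hG
  let cs := Mt.toCoxeterSystem
  let ι : ∀ i, (M i).Group →* G := fun i => Monoid.CoprodI.of (M := fun i => (M i).Group)
  -- inverses of simples
  have hinv : ∀ (i : I) (a : B i),
      (ι i ((M i).simple a))⁻¹
        = ι i ((M i).simple a) := by
    intro i a
    rw [← map_inv]
    congr 1
    exact ((M i).toCoxeterSystem.inv_simple a)
  -- commutators of simples from different vertices equal squares
  have hcomm : ∀ (i j : I) (a : B i) (b : B j),
      (⁅ι i ((M i).simple a),
        ι j ((M j).simple b)⁆ : G)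
      = (ι i ((M i).simple a) * ι j ((M j).simple b)) ^ 2 := by
    intro i j a b
    rw [commutatorElement_def, hinv, hinv, sq]
    group
  -- the forward map
  let f : (Σ i, B i) → G ⧸ N := fun p =>
    QuotientGroup.mk (ι p.1 ((M p.1).simple p.2))
  have hf : Mt.IsLiftable f := by
    rintro ⟨i, a⟩ ⟨j, b⟩
    by_cases hij : i = j
    · subst hij
      rw [hsame]
      show (QuotientGroup.mk _ * QuotientGroup.mk _ : G ⧸ N) ^ _ = 1
      rw [← QuotientGroup.mk_mul, ← QuotientGroup.mk_pow, ← map_mul, ← map_pow]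
      have : ((M i).simple a * (M i).simple b) ^ (M i) a b = 1 :=
        (M i).toCoxeterSystem.simple_mul_simple_pow a b
      rw [this, map_one, QuotientGroup.mk_one]
    · by_cases hAdj : Γ.Adj i j
      · rw [hadj i j a b hij hAdj]
        show (QuotientGroup.mk _ * QuotientGroup.mk _ : G ⧸ N) ^ _ = 1
        rw [← QuotientGroup.mk_mul, ← QuotientGroup.mk_pow, QuotientGroup.eq_one_iff]
        rw [← hcomm, hN]
        exact Subgroup.subset_normalClosure ⟨i, j, a, b, hAdj, rfl⟩
      · rw [hnonadj i j a b hij hAdj, pow_zero]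
  let φ : Mt.Group →* G ⧸ N := cs.lift ⟨f, hf⟩
  have hφ : ∀ (i : I) (a : B i), φ (Mt.simple ⟨i, a⟩)
      = QuotientGroup.mk (ι i ((M i).simple a)) :=
    fun i a => cs.lift_apply_simple hf ⟨i, a⟩
  -- the backward map
  have hg : ∀ i : I, (M i).IsLiftable (fun a => Mt.simple ⟨i, a⟩) := by
    intro i a b
    rw [← hsame]
    exact Mt.toCoxeterSystem.simple_mul_simple_pow ⟨i, a⟩ ⟨i, b⟩
  let ψ₀ : G →* Mt.Group :=
    Monoid.CoprodI.lift (fun i => (M i).toCoxeterSystem.lift ⟨_, hg i⟩)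
  have hψ₀ : ∀ (i : I) (a : B i),
      ψ₀ (ι i ((M i).simple a)) = Mt.simple ⟨i, a⟩ := by
    intro i a
    rw [Monoid.CoprodI.lift_of]
    exact (M i).toCoxeterSystem.lift_apply_simple (hg i) a
  have hker : N ≤ ψ₀.ker := by
    rw [hN]
    refine Subgroup.normalClosure_le_normal ?_
    rintro x ⟨i, j, a, b, hAdj, rfl⟩
    have : ψ₀ ⁅ι i ((M i).simple a),
        ι j ((M j).simple b)⁆ = 1 := by
      rw [hcomm, map_pow, map_mul, hψ₀, hψ₀]
      have h2 := Mt.toCoxeterSystem.simple_mul_simple_pow ⟨i, a⟩ ⟨j, b⟩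
      rwa [hadj i j a b hAdj.ne hAdj] at h2
    exact this
  let ψ : G ⧸ N →* Mt.Group := QuotientGroup.lift N ψ₀ hker
  have hψ : ∀ (i : I) (a : B i),
      ψ (QuotientGroup.mk (ι i ((M i).simple a))) = Mt.simple ⟨i, a⟩ :=
    fun i a => hψ₀ i a
  have h₁ : ψ.comp φ = MonoidHom.id _ := by
    apply cs.ext_simple
    rintro ⟨i, a⟩
    simp only [MonoidHom.comp_apply, MonoidHom.id_apply]
    show ψ (φ (Mt.simple ⟨i, a⟩)) = Mt.simple ⟨i, a⟩
    rw [hφ, hψ]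
  have h₂ : φ.comp ψ = MonoidHom.id _ := by
    apply QuotientGroup.monoidHom_ext
    apply Monoid.CoprodI.ext_hom
    intro i
    apply (M i).toCoxeterSystem.ext_simple
    intro a
    simp only [MonoidHom.comp_apply]
    show φ (ψ (QuotientGroup.mk (ι i ((M i).simple a))))
      = QuotientGroup.mk (ι i ((M i).simple a))
    rw [hψ, hφ]
  exact ⟨φ.toMulEquiv ψ h₁ h₂, hφ⟩
end

section
/- Let M : CoxeterMatrix B be right angled, i.e., M i j ∈ {2, ∞} for all i ≠ j (with ∞ encoded as 0), and let cs : CoxeterSystem M W. If i ≠ j and both i and j are right descents of an element w ∈ W (that is, cs.IsRightDescent w i and cs.IsRightDescent w j), then M i j = 2. In other words, the set End(w) = {i | ℓ(w * sᵢ) < ℓ(w)} of right descents of any element spans a complete subgraph of the defining graph of the right angled Coxeter group. -/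
open List CoxeterSystem
open scoped Classical

section Aux
variable {G : Type*} [Group G]

/-- group identities for a pair of involutions -/
lemma ra_conj_pow_inv {a b : G} (ha : a * a = 1) (hb : b * b = 1) (h : ℕ) :
    b * (a * b) ^ h * b = ((a * b) ^ h)⁻¹ := by
  have hbinv : b⁻¹ = b := by
    rw [inv_eq_iff_mul_eq_one, hb]
  have hc : b * (a * b) * b⁻¹ = (a * b)⁻¹ := by
    rw [hbinv, mul_inv_rev, inv_eq_iff_mul_eq_one.mpr ha, inv_eq_iff_mul_eq_one.mpr hb]
    calc b * (a * b) * b = b * a * (b * b) := by group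
    _ = b * a := by rw [hb, mul_one]
  calc b * (a * b) ^ h * b = b * (a * b) ^ h * b⁻¹ := by rw [hbinv]
  _ = (b * (a * b) * b⁻¹) ^ h := by rw [conj_pow]
  _ = ((a * b)⁻¹) ^ h := by rw [hc]
  _ = ((a * b) ^ h)⁻¹ := by rw [inv_pow]

lemma ra_even_case {a b : G} (ha : a * a = 1) (hb : b * b = 1) (h : ℕ) :
    ((a * b) ^ h)⁻¹ * b * (a * b) ^ h = b * (a * b) ^ (h + h) := by
  have key := ra_conj_pow_inv ha hb h
  rw [← key]
  calc b * (a * b) ^ h * b * b * (a * b) ^ h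
      = b * (a * b) ^ h * (b * b) * (a * b) ^ h := by group
    _ = b * ((a * b) ^ h * (a * b) ^ h) := by rw [hb]; group
    _ = b * (a * b) ^ (h + h) := by rw [pow_add]

lemma ra_odd_case {a b : G} (ha : a * a = 1) (hb : b * b = 1) (h : ℕ) :
    (b * (a * b) ^ h)⁻¹ * a * (b * (a * b) ^ h) = b * (a * b) ^ (h + h + 1) := by
  have key := ra_conj_pow_inv ha hb (h + 1)
  have hbinv : b⁻¹ = b := by rw [inv_eq_iff_mul_eq_one, hb]
  have h1 : b * a * b = ((a*b)^(1:ℕ))⁻¹ * b := by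
    rw [pow_one, mul_inv_rev, inv_eq_iff_mul_eq_one.mpr ha, inv_eq_iff_mul_eq_one.mpr hb]
  calc (b * (a * b) ^ h)⁻¹ * a * (b * (a * b) ^ h)
      = ((a * b) ^ h)⁻¹ * (b⁻¹ * a * b) * (a * b) ^ h := by group
    _ = ((a * b) ^ h)⁻¹ * (((a*b)^(1:ℕ))⁻¹ * b) * (a * b) ^ h := by rw [hbinv, h1]
    _ = ((a * b) ^ (h+1))⁻¹ * b * (a * b) ^ h := by rw [pow_add, mul_inv_rev]; group
    _ = (b * (a * b) ^ (h+1) * b) * b * (a * b) ^ h := by rw [ra_conj_pow_inv ha hb (h+1)]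
    _ = b * (a * b) ^ (h+1) * (b * b) * (a * b) ^ h := by group
    _ = b * ((a * b) ^ (h+1) * (a * b) ^ h) := by rw [hb]; group
    _ = b * (a * b) ^ (h + 1 + h) := by rw [← pow_add]
    _ = b * (a * b) ^ (h + h + 1) := by rw [show h + 1 + h = h + h + 1 by omega]
end Aux


noncomputable section
namespace RAproof
variable {B : Type*} {W : Type*} [Group W] {M : CoxeterMatrix B} (cs : CoxeterSystem M W)

local prefix:100 "s" => cs.simple
local prefix:100 "π" => cs.wordProd
local prefix:100 "ℓ" => cs.length
local prefix:100 "ris" => cs.rightInvSeq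

lemma sigma_invol (i : B) : Function.Involutive
    (fun p : W × ℤˣ => (s i * p.1 * s i, if p.1 = s i then -p.2 else p.2)) := by
  rintro ⟨t, ε⟩
  by_cases h : t = s i
  · subst h
    simp [cs.simple_mul_simple_self]
  · have h2 : s i * t * s i ≠ s i := by
      intro hc
      apply h
      have := congrArg (fun x => s i * x * s i) hc
      simp only [mul_assoc, cs.simple_mul_simple_self, mul_one] at this
      simp only [← mul_assoc, cs.simple_mul_simple_self, one_mul] at this
      simpa [cs.simple_mul_simple_self] using this
    simp only [h, if_neg, h2, if_neg h2, if_neg h]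
    simp [mul_assoc, cs.simple_mul_simple_self, ← mul_assoc]

/-- The Bjorner–Brenti style sign permutation attached to a simple reflection. -/
def raSig (i : B) : Equiv.Perm (W × ℤˣ) := (sigma_invol cs i).toPerm _

lemma sigma_apply (i : B) (t : W) (ε : ℤˣ) :
    raSig cs i (t, ε) = (s i * t * s i, if t = s i then -ε else ε) := rfl

lemma sigma_prod (ω : List B) (t : W) (ε : ℤˣ) :
    ((ω.map (raSig cs)).prod) (t, ε) =
      (π ω * t * (π ω)⁻¹, ε * (-1 : ℤˣ) ^ ((ris ω).count t)) := by
  induction ω generalizing ε with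
  | nil => simp
  | cons i ω ih =>
    rw [map_cons, prod_cons, Equiv.Perm.mul_apply, ih, sigma_apply]
    have hcount : (ris (i :: ω)).count t
        = (ris ω).count t + (if (π ω)⁻¹ * s i * π ω = t then 1 else 0) := by
      show ((((π ω)⁻¹ * s i * π ω)) :: ris ω).count t = _
      rw [List.count_cons]
      simp [beq_iff_eq]
    rw [hcount]
    by_cases hc : (π ω)⁻¹ * s i * π ω = t
    · have hc' : π ω * t * (π ω)⁻¹ = s i := by
        rw [← hc]; group
      rw [if_pos hc, if_pos hc']
      refine Prod.ext ?_ ?_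
      · show s i * (π ω * t * (π ω)⁻¹) * s i = π (i :: ω) * t * (π (i :: ω))⁻¹
        rw [cs.wordProd_cons, mul_inv_rev, cs.inv_simple]
        group
      · show -(ε * (-1:ℤˣ) ^ (ris ω).count t) = ε * (-1) ^ ((ris ω).count t + 1)
        rw [pow_succ]
        simp [mul_neg]
    · have hc' : π ω * t * (π ω)⁻¹ ≠ s i := by
        intro hcc
        apply hc
        rw [← hcc]; group
      rw [if_neg hc, if_neg hc']
      refine Prod.ext ?_ ?_
      · show s i * (π ω * t * (π ω)⁻¹) * s i = π (i :: ω) * t * (π (i :: ω))⁻¹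
        rw [cs.wordProd_cons, mul_inv_rev, cs.inv_simple]
        group
      · simp

lemma alt_drop (i j : B) : ∀ q n, (alternatingWord i j n).drop q = alternatingWord i j (n - q) := by
  intro q
  induction q with
  | zero => intro n; simp
  | succ q ih =>
    intro n
    match n with
    | 0 => simp [alternatingWord]
    | (n + 1) =>
      rw [alternatingWord_succ' i j n, List.drop_succ_cons, ih n]
      congr 1
      omega

lemma alt_get (i j : B) (n k : ℕ) (hk : k < n) :
    (alternatingWord i j n)[k]? = some (if Even (n - k) then i else j) := by
  have h1 : (alternatingWord i j n)[k]? = ((alternatingWord i j n).drop k)[0]? := by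
    rw [List.getElem?_drop]
    norm_num
  rw [h1, alt_drop]
  obtain ⟨r, hr⟩ : ∃ r, n - k = r + 1 := ⟨n - k - 1, by omega⟩
  rw [hr, alternatingWord_succ' i j r]
  have : Even (r + 1) ↔ ¬ Even r := by simp [Nat.even_add_one]
  rcases Nat.even_or_odd r with he | ho
  · simp [he, Nat.even_add_one]
  · simp [Nat.not_even_iff_odd.mpr ho, Nat.even_add_one]

lemma ris_alt (i j : B) (n k : ℕ) (hk : k < n) :
    (ris (alternatingWord i j n)).getD k 1 = s j * (s i * s j) ^ (n - k - 1) := by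
  rw [cs.getD_rightInvSeq, alt_drop, alt_get i j n k hk]
  set r := n - k - 1 with hr
  have hnk : n - (k + 1) = r := by omega
  have hnk2 : n - k = r + 1 := by omega
  rw [hnk, hnk2]
  have hEven : (if Even (r + 1) then i else j) = (if Even r then j else i) := by
    rcases Nat.even_or_odd r with he | ho
    · simp [he, Nat.even_add_one]
    · simp [Nat.not_even_iff_odd.mpr ho, Nat.even_add_one]
  rw [hEven]
  clear_value r
  simp only [Option.map_some, Option.getD_some]
  -- now the group computation
  rw [cs.prod_alternatingWord_eq_mul_pow]
  have ha : s i * s i = 1 := cs.simple_mul_simple_self i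
  have hb : s j * s j = 1 := cs.simple_mul_simple_self j
  rcases Nat.even_or_odd r with he | ho
  · obtain ⟨h, rfl⟩ := he
    have h2 : (h + h) / 2 = h := by omega
    have he2 : Even (h + h) := ⟨h, rfl⟩
    simp only [if_pos he2, h2, one_mul]
    exact ra_even_case ha hb h
  · obtain ⟨h, rfl⟩ := ho
    have hodd : ¬ Even (2 * h + 1) := by simp [parity_simps]
    have h2 : (2 * h + 1) / 2 = h := by omega
    simp only [if_neg hodd, h2]
    have := ra_odd_case ha hb h
    rw [show h + h + 1 = 2 * h + 1 by omega] at this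
    exact this

lemma prod_map_alt {G : Type*} [Monoid G] (f : B → G) (i j : B) (m : ℕ) :
    ((alternatingWord i j (2 * m)).map f).prod = (f i * f j) ^ m := by
  induction m with
  | zero => simp [alternatingWord]
  | succ m ih =>
    have h1 : 2 * (m + 1) = (2 * m + 1) + 1 := by omega
    rw [h1, alternatingWord_succ' i j (2 * m + 1), alternatingWord_succ' i j (2 * m)]
    have ho : ¬ Even (2 * m + 1) := by simp [parity_simps]
    have he : Even (2 * m) := ⟨m, by omega⟩
    rw [if_neg ho, if_pos he]
    rw [map_cons, map_cons, prod_cons, prod_cons, ih, ← mul_assoc, pow_succ']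

lemma ris_alt_double (i j : B) (m : ℕ) (hm : (s i * s j) ^ m = 1) :
    ris (alternatingWord i j (2 * m)) =
      ((List.range m).map (fun k => s j * (s i * s j) ^ (m - 1 - k))) ++
      ((List.range m).map (fun k => s j * (s i * s j) ^ (m - 1 - k))) := by
  apply List.ext_getElem
  · simp [cs.length_rightInvSeq]; omega
  · intro k h1 h2
    have hlen : (ris (alternatingWord i j (2 * m))).length = 2 * m := by
      simp [cs.length_rightInvSeq]
    have hk : k < 2 * m := by rwa [hlen] at h1
    have hL : (ris (alternatingWord i j (2 * m)))[k] =
        (ris (alternatingWord i j (2 * m))).getD k 1 := by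
      rw [List.getD_eq_getElem _ 1 h1]
    rw [hL, ris_alt cs i j (2 * m) k hk]
    by_cases hkm : k < m
    · rw [List.getElem_append_left (by simpa using hkm)]
      rw [List.getElem_map, List.getElem_range]
      have : 2 * m - k - 1 = (m - 1 - k) + m := by omega
      rw [this, pow_add, hm, mul_one]
    · have hkm' : k - m < m := by omega
      rw [List.getElem_append_right (by simpa using hkm)]
      rw [List.getElem_map, List.getElem_range]
      congr 2
      simp only [List.length_map, List.length_range]
      omega

lemma sigma_liftable : M.IsLiftable (raSig cs) := by
  intro i j
  have hm : (s i * s j) ^ M i j = 1 := cs.simple_mul_simple_pow i j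
  have halt : π (alternatingWord i j (2 * M i j)) = 1 := by
    rw [cs.prod_alternatingWord_eq_mul_pow]
    have he : Even (2 * M i j) := ⟨M i j, by omega⟩
    rw [if_pos he]
    have : 2 * M i j / 2 = M i j := by omega
    rw [this, one_mul, hm]
  have h1 : (raSig cs i * raSig cs j) ^ M i j
      = ((alternatingWord i j (2 * M i j)).map (raSig cs)).prod :=
    (prod_map_alt (raSig cs) i j (M i j)).symm
  rw [h1]
  ext ⟨t, ε⟩
  · rw [sigma_prod cs, halt]
    simp
  · rw [sigma_prod cs, halt]
    rw [ris_alt_double cs i j (M i j) hm]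
    rw [List.count_append]
    simp only [Equiv.Perm.coe_one, id_eq]
    rw [pow_add]
    simp [Int.units_mul_self]

/-- The permutation representation of the Coxeter group. -/
def theta : W →* Equiv.Perm (W × ℤˣ) := cs.lift ⟨raSig cs, sigma_liftable cs⟩

lemma theta_wordProd (ω : List B) : theta cs (π ω) = ((ω.map (raSig cs)).prod) := by
  induction ω with
  | nil => simp [cs.wordProd_nil]
  | cons i ω ih =>
    rw [cs.wordProd_cons, map_cons, prod_cons, map_mul, ih, theta, cs.lift_apply_simple]

lemma getD_drop_add {α : Type*} (l : List α) (d : α) (a b : ℕ) (h : a + b < l.length) :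
    (l.drop a).getD b d = l.getD (a + b) d := by
  have hb : b < (l.drop a).length := by
    rw [List.length_drop]
    omega
  rw [List.getD_eq_getElem _ _ hb, List.getD_eq_getElem _ _ h]
  exact List.getElem_drop


lemma count_parity (ω ω' : List B) (h : π ω = π ω') (t : W) :
    (-1 : ℤˣ) ^ ((ris ω).count t) = (-1 : ℤˣ) ^ ((ris ω').count t) := by
  have h1 : ((ω.map (raSig cs)).prod) (t, 1) = ((ω'.map (raSig cs)).prod) (t, 1) := by
    rw [← theta_wordProd cs, ← theta_wordProd cs, h]
  rw [sigma_prod cs, sigma_prod cs] at h1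
  have := congrArg Prod.snd h1
  simpa using this

lemma descent_mem_ris {ω : List B} (hr : cs.IsReduced ω) {c : B}
    (hd : cs.IsRightDescent (π ω) c) : s c ∈ ris ω := by
  obtain ⟨ω', hω', hw⟩ := cs.exists_reduced_word' (π ω * s c)
  have hπ : π (ω'.concat c) = π ω := by
    rw [cs.wordProd_concat, ← hw, mul_assoc, cs.simple_mul_simple_self, mul_one]
  have hlen : ℓ (π ω * s c) + 1 = ℓ (π ω) := cs.isRightDescent_iff.mp hd
  have hred : cs.IsReduced (ω'.concat c) := by
    unfold CoxeterSystem.IsReduced at hω' ⊢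
    rw [hπ, List.length_concat, ← hω', ← hw]
    omega
  have hmem : s c ∈ ris (ω'.concat c) := by
    rw [cs.rightInvSeq_concat]
    simp
  have hcount1 : (ris (ω'.concat c)).count (s c) = 1 :=
    List.count_eq_one_of_mem (hred.nodup_rightInvSeq) hmem
  have hpar := count_parity cs ω (ω'.concat c) hπ.symm (s c)
  rw [hcount1, pow_one] at hpar
  have hne : (ris ω).count (s c) ≠ 0 := by
    intro h0
    rw [h0, pow_zero] at hpar
    exact (by decide : (1 : ℤˣ) ≠ -1) hpar
  exact List.count_pos_iff.mp (Nat.pos_of_ne_zero hne)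

lemma pow_alt_ne_one (i j : B) (h0 : M i j = 0)
    (hra : ∀ a b : B, a ≠ b → M a b = 2 ∨ M a b = 0) (hij : i ≠ j) :
    ∀ q : ℕ, (s i * s j) ^ q = 1 → q = 0 := by
  classical
  set f : B → DihedralGroup 0 :=
    fun b => if b = i then DihedralGroup.sr 0 else if b = j then DihedralGroup.sr 1 else 1 with hf
  have hinv : ∀ b, f b * f b = 1 := by
    intro b
    simp only [hf]
    split_ifs <;> first | rw [DihedralGroup.sr_mul_self] | rw [one_mul]
  have hlift : M.IsLiftable f := by
    intro a b
    rcases eq_or_ne a b with rfl | hab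
    · rw [M.diagonal, pow_one, hinv]
    · rcases hra a b hab with h2' | h0'
      · rw [h2']
        have hone : f a = 1 ∨ f b = 1 := by
          by_cases hai : a = i
          · by_cases hbj : b = j
            · exfalso; rw [hai, hbj] at h2'; rw [h2'] at h0; exact two_ne_zero h0
            · right
              have hbi : b ≠ i := by rw [hai] at hab; exact fun hc => hab hc.symm
              simp [hf, hbi, hbj]
          · by_cases haj : a = j
            · by_cases hbi : b = i
              · exfalso
                rw [haj, hbi] at h2'
                have hsym := M.symmetric j i
                change M.M j i = 2 at h2'
                change M.M i j = 0 at h0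
                omega
              · right
                have hbj : b ≠ j := by rw [haj] at hab; exact fun hc => hab hc.symm
                simp [hf, hbi, hbj]
            · left; simp [hf, hai, haj]
        rcases hone with h1 | h1
        · rw [h1, one_mul, pow_two, hinv]
        · rw [h1, mul_one, pow_two, hinv]
      · rw [h0', pow_zero]
  intro q hq
  have hφ := congrArg (cs.lift ⟨f, hlift⟩) hq
  rw [map_pow, map_mul, cs.lift_apply_simple, cs.lift_apply_simple, map_one] at hφ
  have hfi : f i = DihedralGroup.sr 0 := by simp [hf]
  have hfj : f j = DihedralGroup.sr 1 := by simp [hf, hij.symm]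
  rw [hfi, hfj, DihedralGroup.sr_mul_sr] at hφ
  rw [show ((1 : ZMod 0) - 0) = 1 by norm_num, DihedralGroup.r_one_pow,
    DihedralGroup.one_def] at hφ
  have : (q : ZMod 0) = 0 := by
    injection hφ
  exact_mod_cast this

theorem main_result (hra : ∀ a b : B, a ≠ b → M a b = 2 ∨ M a b = 0)
    (w : W) (i j : B) (hij : i ≠ j)
    (hi : cs.IsRightDescent w i) (hj : cs.IsRightDescent w j) :
    M i j = 2 := by
  rcases hra i j hij with h2 | h0
  · exact h2
  exfalso
  have hord := pow_alt_ne_one cs i j h0 hra hij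
  have key : ∀ n : ℕ, ∃ c c' : B, ((c = i ∧ c' = j) ∨ (c = j ∧ c' = i)) ∧
      ∃ η : List B, w = π (η ++ alternatingWord c c' n) ∧
        cs.IsReduced (η ++ alternatingWord c c' n) := by
    intro n
    induction n with
    | zero =>
      obtain ⟨ω, hred, hw⟩ := cs.exists_reduced_word' w
      exact ⟨i, j, Or.inl ⟨rfl, rfl⟩, ω, by simpa [alternatingWord] using hw,
        by simpa [alternatingWord] using hred⟩
    | succ n ih =>
      obtain ⟨c, c', hcc, η, hw, hred⟩ := ih
      set ω := η ++ alternatingWord c c' n with hω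
      have hdesc : cs.IsRightDescent (π ω) c := by
        rw [← hw]
        rcases hcc with ⟨h1, _⟩ | ⟨h1, _⟩
        · rw [h1]; exact hi
        · rw [h1]; exact hj
      have hmem := descent_mem_ris cs hred hdesc
      obtain ⟨k, hk, hget⟩ := List.getElem_of_mem hmem
      have hk' : k < ω.length := by
        have := cs.length_rightInvSeq ω
        omega
      have hωlen : ω.length = η.length + n := by
        simp [hω]
      have hgetD : (ris ω).getD k 1 = s c := by
        rw [List.getD_eq_getElem _ 1 hk, hget]
      have heq : π ω * s c = π (ω.eraseIdx k) := by
        rw [← hgetD]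
        exact cs.wordProd_mul_getD_rightInvSeq ω k
      by_cases hkη : k < η.length
      · refine ⟨c', c, ?_, η.eraseIdx k, ?_, ?_⟩
        · rcases hcc with ⟨h1, h2⟩ | ⟨h1, h2⟩
          · right; exact ⟨h2, h1⟩
          · left; exact ⟨h2, h1⟩
        · have he : ω.eraseIdx k = η.eraseIdx k ++ alternatingWord c c' n :=
            List.eraseIdx_append_of_lt_length hkη _
          have hsucc : alternatingWord c' c (n + 1) = (alternatingWord c c' n).concat c :=
            alternatingWord_succ c' c n
          calc w = π ω := hw
            _ = π (ω.eraseIdx k) * s c := by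
                rw [← heq, mul_assoc, cs.simple_mul_simple_self, mul_one]
            _ = π (η.eraseIdx k ++ alternatingWord c c' n) * s c := by rw [he]
            _ = π (η.eraseIdx k) * (π (alternatingWord c c' n) * s c) := by
                rw [cs.wordProd_append, mul_assoc]
            _ = π (η.eraseIdx k) * π (alternatingWord c' c (n + 1)) := by
                rw [hsucc, cs.wordProd_concat]
            _ = π (η.eraseIdx k ++ alternatingWord c' c (n + 1)) := by
                rw [cs.wordProd_append]
        · unfold CoxeterSystem.IsReduced
          have hπeq : π (η.eraseIdx k ++ alternatingWord c' c (n + 1)) = w := by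
            have he : ω.eraseIdx k = η.eraseIdx k ++ alternatingWord c c' n :=
              List.eraseIdx_append_of_lt_length hkη _
            have hsucc : alternatingWord c' c (n + 1) = (alternatingWord c c' n).concat c :=
              alternatingWord_succ c' c n
            rw [cs.wordProd_append, hsucc, cs.wordProd_concat, ← mul_assoc,
              ← cs.wordProd_append, ← he, ← heq, hw, mul_assoc, cs.simple_mul_simple_self,
              mul_one]
          rw [hπeq]
          have hlw : ℓ w = η.length + n := by
            rw [hw]
            rw [hred]
            exact hωlen
          have hle : (η.eraseIdx k).length = η.length - 1 := by
            rw [List.length_eraseIdx, if_pos hkη]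
          simp only [List.length_append, hle, length_alternatingWord]
          omega
      · exfalso
        have hηk : η.length ≤ k := le_of_not_gt hkη
        set m := k - η.length with hm
        have hmn : m < n := by omega
        have hdropris : ris (alternatingWord c c' n) = (ris ω).drop η.length := by
          rw [← cs.rightInvSeq_drop]
          congr 1
          exact (List.drop_left).symm
        have hgd : (ris (alternatingWord c c' n)).getD m 1 = s c := by
          rw [hdropris, getD_drop_add _ _ _ _ (by rw [cs.length_rightInvSeq]; omega),
            show η.length + m = k by omega, hgetD]
        rw [ris_alt cs c c' n m hmn] at hgd
        -- hgd : s c' * (s c * s c')^(n - m - 1) = s c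
        have hpow : (s c * s c') ^ (n - m - 1) = s c' * s c := by
          have := congrArg (fun x => s c' * x) hgd
          simpa [← mul_assoc, cs.simple_mul_simple_self] using this
        have hq : (s c * s c') ^ (n - m) = 1 := by
          have hnm : n - m = (n - m - 1) + 1 := by omega
          rw [hnm, pow_succ, hpow]
          calc s c' * s c * (s c * s c') = s c' * (s c * s c) * s c' := by group
            _ = s c' * s c' := by rw [cs.simple_mul_simple_self, mul_one]
            _ = 1 := cs.simple_mul_simple_self c'
        have hq' : (s i * s j) ^ (n - m) = 1 := by
          rcases hcc with ⟨h1, h2⟩ | ⟨h1, h2⟩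
          · rw [h1, h2] at hq
            exact hq
          · rw [h1, h2] at hq
            have hrev : (s i * s j) = (s j * s i)⁻¹ := by
              rw [mul_inv_rev, cs.inv_simple, cs.inv_simple]
            rw [hrev, inv_pow, hq, inv_one]
        have := hord (n - m) hq'
        omega
  obtain ⟨c, c', hcc, η, hw, hred⟩ := key (ℓ w + 1)
  have h1 : ℓ w = η.length + (ℓ w + 1) := by
    have h2 := hred
    unfold CoxeterSystem.IsReduced at h2
    rw [← hw] at h2
    simpa using h2
  omega

end RAproof
end

/-- Let `M : CoxeterMatrix B` be right angled, i.e. `M i j ∈ {2, ∞}` for all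
`i ≠ j` (with `∞` encoded as `0`), and let `cs : CoxeterSystem M W`. If `i ≠ j` and both `i`
and `j` are right descents of an element `w : W`, then `M i j = 2`. In other words, the set
`End(w)` of right descents of any element spans a complete subgraph of the defining graph of
the right angled Coxeter group. -/
theorem rightAngled_descents_commute {B : Type*} {W : Type*} [Group W]
    {M : CoxeterMatrix B} (cs : CoxeterSystem M W)
    (hra : ∀ i j : B, i ≠ j → M i j = 2 ∨ M i j = 0)
    (w : W) (i j : B) (hij : i ≠ j)
    (hi : cs.IsRightDescent w i) (hj : cs.IsRightDescent w j) :
    M i j = 2 :=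
  RAproof.main_result cs hra w i j hij hi hj
end

section
/- Let Δ be a building of type (W,S), C₀ a chamber, and C₁ ≠ C₂ chambers with δ C₁ C₂ = sᵢ and ℓ(δ C₀ C₁) = ℓ(δ C₀ C₂) = n. Then δ C₀ C₁ = δ C₀ C₂, and there is a unique chamber C in the i-panel of C₁ with ℓ(δ C₀ C) = n − 1; this chamber satisfies δ C₀ C₁ = (δ C₀ C) * sᵢ. -/
private theorem building_key {B : Type*} {W : Type*} [Group W]
    {M : CoxeterMatrix B} (cs : CoxeterSystem M W)
    {Δ : Type*} (δ : Δ → Δ → W)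
    (hWD1 : ∀ C D : Δ, δ C D = 1 ↔ C = D)
    (hWD2 : ∀ (C C' D : Δ) (i : B), δ C' C = cs.simple i →
      (δ C' D = cs.simple i * δ C D ∨ δ C' D = δ C D) ∧
      (cs.length (cs.simple i * δ C D) = cs.length (δ C D) + 1 →
        δ C' D = cs.simple i * δ C D))
    (hWD3 : ∀ (C D : Δ) (i : B), ∃ C' : Δ,
      δ C' C = cs.simple i ∧ δ C' D = cs.simple i * δ C D) :
    ∀ (l : List B) (C D : Δ), δ C D = cs.wordProd l →
      ∀ (m : List B) (X : Δ), cs.IsReduced (l.reverse ++ m) → δ C X = cs.wordProd m →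
        δ D X = cs.wordProd (l.reverse ++ m) := by
  intro l
  induction l with
  | nil =>
    intro C D hCD m X hred hCX
    have : C = D := (hWD1 C D).mp (by simpa using hCD)
    subst this
    simpa using hCX
  | cons i t ih =>
    intro C D hCD m X hred hCX
    obtain ⟨C', hC'C, hC'D⟩ := hWD3 C D i
    have hC'D' : δ C' D = cs.wordProd t := by
      rw [hC'D, hCD, cs.wordProd_cons, ← mul_assoc, cs.simple_mul_simple_self, one_mul]
    have hre : (i :: t).reverse ++ m = t.reverse ++ (i :: m) := by simp
    -- i :: m is reduced (suffix of the reduced word)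
    have hredim : cs.IsReduced (i :: m) := by
      have := hred.drop (t.reverse.length)
      rwa [hre, List.drop_left] at this
    have hredm : cs.IsReduced m := by
      have := hredim.drop 1
      simpa using this
    have hforce : cs.length (cs.simple i * δ C X) = cs.length (δ C X) + 1 := by
      rw [hCX, ← cs.wordProd_cons]
      rw [hredim, hredm]
      simp
    have hC'X : δ C' X = cs.wordProd (i :: m) := by
      rw [cs.wordProd_cons, ← hCX]
      exact (hWD2 C C' X i hC'C).2 hforce
    have := ih C' D hC'D' (i :: m) X (by rwa [hre] at hred) hC'X
    rwa [hre]
private theorem building_rev {B : Type*} {W : Type*} [Group W]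
    {M : CoxeterMatrix B} (cs : CoxeterSystem M W)
    {Δ : Type*} (δ : Δ → Δ → W)
    (hWD1 : ∀ C D : Δ, δ C D = 1 ↔ C = D)
    (hWD2 : ∀ (C C' D : Δ) (i : B), δ C' C = cs.simple i →
      (δ C' D = cs.simple i * δ C D ∨ δ C' D = δ C D) ∧
      (cs.length (cs.simple i * δ C D) = cs.length (δ C D) + 1 →
        δ C' D = cs.simple i * δ C D))
    (hWD3 : ∀ (C D : Δ) (i : B), ∃ C' : Δ,
      δ C' C = cs.simple i ∧ δ C' D = cs.simple i * δ C D)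
    (C D : Δ) : δ D C = (δ C D)⁻¹ := by
  obtain ⟨l, hl, hw⟩ := cs.exists_reduced_word' (δ C D)
  have := building_key cs δ hWD1 hWD2 hWD3 l C D hw [] C
    (by simpa using (cs.isReduced_reverse_iff l).mpr hl)
    (by simpa using (hWD1 C C).mpr rfl)
  rw [this, hw]
  simp

/-- Let `Δ` be a building of type `(W, S)`, `C₀` a chamber, and `C₁ ≠ C₂`
chambers with `δ C₁ C₂ = sᵢ` and `ℓ(δ C₀ C₁) = ℓ(δ C₀ C₂) = n`. Then `δ C₀ C₁ = δ C₀ C₂`,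
and there is a unique chamber `C` in the `i`-panel of `C₁` with `ℓ(δ C₀ C) = n - 1`;
this chamber satisfies `δ C₀ C₁ = (δ C₀ C) * sᵢ`. -/
theorem unique_gate_in_panel {B : Type*} {W : Type*} [Group W]
    {M : CoxeterMatrix B} (cs : CoxeterSystem M W)
    {Δ : Type*} [Nonempty Δ] (δ : Δ → Δ → W)
    (hWD1 : ∀ C D : Δ, δ C D = 1 ↔ C = D)
    (hWD2 : ∀ (C C' D : Δ) (i : B), δ C' C = cs.simple i →
      (δ C' D = cs.simple i * δ C D ∨ δ C' D = δ C D) ∧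
      (cs.length (cs.simple i * δ C D) = cs.length (δ C D) + 1 →
        δ C' D = cs.simple i * δ C D))
    (hWD3 : ∀ (C D : Δ) (i : B), ∃ C' : Δ,
      δ C' C = cs.simple i ∧ δ C' D = cs.simple i * δ C D)
    (n : ℕ) (C₀ C₁ C₂ : Δ) (i : B) (hne : C₁ ≠ C₂) (h12 : δ C₁ C₂ = cs.simple i)
    (h1 : cs.length (δ C₀ C₁) = n) (h2 : cs.length (δ C₀ C₂) = n) :
    δ C₀ C₁ = δ C₀ C₂ ∧
    (∃! C : Δ, (δ C₁ C = 1 ∨ δ C₁ C = cs.simple i) ∧ cs.length (δ C₀ C) = n - 1) ∧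
    (∀ C : Δ, (δ C₁ C = 1 ∨ δ C₁ C = cs.simple i) → cs.length (δ C₀ C) = n - 1 →
      δ C₀ C₁ = δ C₀ C * cs.simple i) := by
  have rev := building_rev cs δ hWD1 hWD2 hWD3
  have hsne : cs.simple i ≠ 1 := by
    intro h
    have := cs.length_simple i
    rw [h, cs.length_one] at this
    exact one_ne_zero this.symm
  -- n ≥ 1
  have hn : 1 ≤ n := by
    rcases Nat.eq_zero_or_pos n with h0 | h
    · exfalso
      rw [h0, cs.length_eq_zero_iff] at h1 h2
      exact hne (((hWD1 C₀ C₁).mp h1).symm ▸ ((hWD1 C₀ C₂).mp h2).symm ▸ rfl)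
    · exact h
  have hl1 : cs.length (δ C₁ C₀) = n := by rw [rev C₀ C₁, cs.length_inv, h1]
  have hl2 : cs.length (δ C₂ C₀) = n := by rw [rev C₀ C₂, cs.length_inv, h2]
  -- Part 1 : δ C₁ C₀ = δ C₂ C₀
  have hv : δ C₁ C₀ = δ C₂ C₀ := by
    rcases (hWD2 C₂ C₁ C₀ i h12).1 with h | h
    · exfalso
      apply cs.length_simple_mul_ne (δ C₂ C₀) i
      rw [← h, hl1, hl2]
    · exact h
  have part1 : δ C₀ C₁ = δ C₀ C₂ := by
    have : (δ C₀ C₁)⁻¹ = (δ C₀ C₂)⁻¹ := by rw [← rev C₀ C₁, ← rev C₀ C₂, hv]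
    exact inv_injective this
  set v := δ C₁ C₀ with hvdef
  -- length of sᵢ v is n - 1
  have hlsv : cs.length (cs.simple i * v) = n - 1 := by
    rcases cs.length_simple_mul v i with h | h
    · exfalso
      have h2' := (hWD2 C₂ C₁ C₀ i h12).2 (by rw [← hv, h])
      rw [← hv, ← hvdef] at h2'
      exact hsne (right_eq_mul.mp h2')
    · omega
  -- key fact: any chamber in the panel with length n-1 satisfies δ C C₀ = sᵢ v
  have key : ∀ C : Δ, (δ C₁ C = 1 ∨ δ C₁ C = cs.simple i) → cs.length (δ C₀ C) = n - 1 →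
      δ C C₀ = cs.simple i * v := by
    intro C hpan hlen
    have hCne : C ≠ C₁ := by
      intro h
      subst h
      omega
    have hadj : δ C₁ C = cs.simple i := by
      rcases hpan with h | h
      · exact absurd ((hWD1 C₁ C).mp h).symm hCne
      · exact h
    have hadj' : δ C C₁ = cs.simple i := by
      rw [rev C₁ C, hadj, cs.inv_simple]
    have hlC : cs.length (δ C C₀) = n - 1 := by
      rw [rev C₀ C, cs.length_inv, hlen]
    rcases (hWD2 C₁ C C₀ i hadj').1 with h | h
    · exact h
    · exfalso
      rw [← hvdef] at h
      rw [h, hl1] at hlC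
      omega
  -- existence
  obtain ⟨C, hCC₁, hCC₀⟩ := hWD3 C₁ C₀ i
  rw [← hvdef] at hCC₀
  have hCpan : δ C₁ C = 1 ∨ δ C₁ C = cs.simple i := by
    right; rw [rev C C₁, hCC₁, cs.inv_simple]
  have hClen : cs.length (δ C₀ C) = n - 1 := by
    rw [rev C C₀, cs.length_inv, hCC₀, hlsv]
  refine ⟨part1, ⟨C, ⟨hCpan, hClen⟩, ?_⟩, ?_⟩
  · -- uniqueness
    rintro C' ⟨hpan', hlen'⟩
    have hC'C₀ : δ C' C₀ = cs.simple i * v := key C' hpan' hlen'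
    have hC'ne : C' ≠ C₁ := by intro h; subst h; omega
    have hadj' : δ C₁ C' = cs.simple i := by
      rcases hpan' with h | h
      · exact absurd ((hWD1 C₁ C').mp h).symm hC'ne
      · exact h
    have hCC₁' : δ C C₁ = cs.simple i := by
      rw [rev C₁ C, (hCpan.resolve_left (by
        intro h; have := ((hWD1 C₁ C).mp h); rw [← this] at hClen; omega)), cs.inv_simple]
    rcases (hWD2 C₁ C C' i hCC₁').1 with h | h
    · -- δ C C' = sᵢ * sᵢ = 1? no: δ C C' = sᵢ * δ C₁ C' = 1
      rw [hadj', cs.simple_mul_simple_self] at h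
      exact ((hWD1 C C').mp h).symm
    · rw [hadj'] at h
      -- δ C C' = sᵢ ; derive contradiction
      exfalso
      have hforce : cs.length (cs.simple i * δ C' C₀) = cs.length (δ C' C₀) + 1 := by
        rw [hC'C₀, ← mul_assoc, cs.simple_mul_simple_self, one_mul, hl1, hlsv]
        omega
      have heq := (hWD2 C' C C₀ i h).2 hforce
      rw [hC'C₀, ← mul_assoc, cs.simple_mul_simple_self, one_mul, hCC₀] at heq
      rw [heq, hl1] at hlsv
      omega
  · -- part 3
    intro C' hpan' hlen'
    have hC'C₀ : δ C' C₀ = cs.simple i * v := key C' hpan' hlen'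
    have : δ C₀ C' = v⁻¹ * cs.simple i := by
      rw [rev C' C₀, hC'C₀, mul_inv_rev, cs.inv_simple]
    have hvi : v⁻¹ = δ C₀ C₁ := by rw [hvdef, rev C₀ C₁, inv_inv]
    rw [this, mul_assoc, cs.simple_mul_simple_self, mul_one, hvi]
end
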